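/- arXiv:0903.2515 — 9 statements merged into one kernel-verified Lean document; each statement's English description precedes it below -/
import Mathlib

section
/- Let X be an n×p matrix and Σ a p×p symmetric matrix with Δ := XᵀX/n − Σ. Suppose max_{j,k} |Δ_{jk}| ≤ τ. Then for any vector γ ∈ ℝᵖ, index set S with |S| ≤ s, and k₀ > 0 such that ‖γ_{Sᶜ}‖₁ ≤ k₀‖γ_{S}‖₁, one has |‖Xγ‖₂²/n − γᵀΣγ| ≤ s(1+k₀)² τ ‖γ_S‖₂². -/
open Finset

/-- Deterministic comparison of empirical and population quadratic forms:
if every entry of `Δ = XᵀX/n − Σ` is bounded by `τ`, then for every `γ` in the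
cone `‖γ_{Sᶜ}‖₁ ≤ k₀ ‖γ_S‖₁` with `|S| ≤ s`,
`|‖Xγ‖₂²/n − γᵀΣγ| ≤ s (1+k₀)² τ ‖γ_S‖₂²`. -/
theorem empirical_population_quadratic_form_bound (n p s : ℕ) (hn : 0 < n)
    (X : Matrix (Fin n) (Fin p) ℝ) (Sig : Matrix (Fin p) (Fin p) ℝ)
    (hsym : Sig.IsSymm) (τ : ℝ) (hτ : 0 ≤ τ)
    (hΔ : ∀ j k, |(∑ i, X i j * X i k) / n - Sig j k| ≤ τ)
    (γ : Fin p → ℝ) (S : Finset (Fin p)) (hS : S.card ≤ s)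
    (k₀ : ℝ) (hk₀ : 0 < k₀)
    (hcone : (∑ j ∈ Sᶜ, |γ j|) ≤ k₀ * ∑ j ∈ S, |γ j|) :
    |(∑ i, (∑ j, X i j * γ j) ^ 2) / n - ∑ j, ∑ k, γ j * Sig j k * γ k| ≤
      s * (1 + k₀) ^ 2 * τ * ∑ j ∈ S, γ j ^ 2 := by
  set A := ∑ j ∈ S, |γ j| with hA
  have hA0 : 0 ≤ A := Finset.sum_nonneg fun _ _ => abs_nonneg _
  -- Step 1: rewrite the difference in terms of Δ
  have h1 : (∑ i, (∑ j, X i j * γ j) ^ 2)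
      = ∑ j, ∑ k, γ j * γ k * (∑ i, X i j * X i k) := by
    simp_rw [sq, Finset.sum_mul_sum, Finset.mul_sum]
    rw [Finset.sum_comm]
    refine Finset.sum_congr rfl fun j _ => ?_
    rw [Finset.sum_comm]
    refine Finset.sum_congr rfl fun k _ => ?_
    exact Finset.sum_congr rfl fun i _ => by ring

  have key : (∑ i, (∑ j, X i j * γ j) ^ 2) / n - ∑ j, ∑ k, γ j * Sig j k * γ k
      = ∑ j, ∑ k, γ j * γ k * ((∑ i, X i j * X i k) / n - Sig j k) := by
    rw [h1, Finset.sum_div, ← Finset.sum_sub_distrib]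
    refine Finset.sum_congr rfl fun j _ => ?_
    rw [Finset.sum_div, ← Finset.sum_sub_distrib]
    refine Finset.sum_congr rfl fun k _ => ?_
    field_simp
  rw [key]
  -- Step 2: bound by τ * (ℓ1 norm)^2
  have h2 : |∑ j, ∑ k, γ j * γ k * ((∑ i, X i j * X i k) / n - Sig j k)|
      ≤ τ * (∑ j, |γ j|) ^ 2 := by
    calc |∑ j, ∑ k, γ j * γ k * ((∑ i, X i j * X i k) / n - Sig j k)|
        ≤ ∑ j, ∑ k, |γ j * γ k * ((∑ i, X i j * X i k) / n - Sig j k)| := by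
          refine (Finset.abs_sum_le_sum_abs _ _).trans ?_
          exact Finset.sum_le_sum fun j _ => Finset.abs_sum_le_sum_abs _ _
      _ ≤ ∑ j, ∑ k, |γ j| * |γ k| * τ := by
          refine Finset.sum_le_sum fun j _ => Finset.sum_le_sum fun k _ => ?_
          rw [abs_mul, abs_mul]
          exact mul_le_mul_of_nonneg_left (hΔ j k) (by positivity)
      _ = τ * (∑ j, |γ j|) ^ 2 := by
          simp_rw [← Finset.sum_mul, ← Finset.mul_sum, ← Finset.sum_mul]
          ring
  -- Step 3: ℓ1 norm ≤ (1+k₀) A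
  have h3 : (∑ j, |γ j|) ≤ (1 + k₀) * A := by
    rw [← Finset.sum_add_sum_compl S]
    nlinarith [hcone]
  have h4 : (∑ j, |γ j|) ^ 2 ≤ (1 + k₀) ^ 2 * A ^ 2 := by
    have hnn : 0 ≤ ∑ j, |γ j| := Finset.sum_nonneg fun _ _ => abs_nonneg _
    nlinarith
  -- Step 4: A^2 ≤ s * ∑ γ²
  have h5 : A ^ 2 ≤ (s : ℝ) * ∑ j ∈ S, γ j ^ 2 := by
    have := sq_sum_le_card_mul_sum_sq (s := S) (f := fun j => |γ j|)
    simp_rw [sq_abs] at this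
    refine this.trans ?_
    have hsum : 0 ≤ ∑ j ∈ S, γ j ^ 2 := Finset.sum_nonneg fun _ _ => sq_nonneg _
    exact mul_le_mul_of_nonneg_right (by exact_mod_cast hS) hsum
  have hsum : 0 ≤ ∑ j ∈ S, γ j ^ 2 := Finset.sum_nonneg fun _ _ => sq_nonneg _
  calc |∑ j, ∑ k, γ j * γ k * ((∑ i, X i j * X i k) / n - Sig j k)|
      ≤ τ * (∑ j, |γ j|) ^ 2 := h2
    _ ≤ τ * ((1 + k₀) ^ 2 * A ^ 2) := by
        exact mul_le_mul_of_nonneg_left h4 hτ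
    _ ≤ τ * ((1 + k₀) ^ 2 * ((s : ℝ) * ∑ j ∈ S, γ j ^ 2)) := by
        refine mul_le_mul_of_nonneg_left ?_ hτ
        exact mul_le_mul_of_nonneg_left h5 (by positivity)
    _ = s * (1 + k₀) ^ 2 * τ * ∑ j ∈ S, γ j ^ 2 := by ring
end

section
/- Let Σ satisfy RE(s, s, k₀, Σ) with constant K = K(s,s,k₀,Σ). If max_{j,k}|XᵀX/n − Σ|_{jk} ≤ C₂√(log p / n) and s ≤ √(n/log p) / (32 C₂ K²(s,3,3,Σ)) with k₀ ≤ 3, then X satisfies the restricted eigenvalue condition RE(s, s, k₀, X) with constant K(s,s,k₀,X) ≤ √2 · K(s,s,k₀,Σ). -/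
open Finset

/-- Restricted eigenvalue condition `RE(s, m, k₀, ·)` with constant `K` for a
quadratic-form norm `Q` (e.g. `Q γ = ‖Σ^{1/2}γ‖₂` or `Q γ = ‖Xγ‖₂/√n`): for all
`|J₀| ≤ s` and `γ ≠ 0` in the cone `‖γ_{J₀ᶜ}‖₁ ≤ k₀‖γ_{J₀}‖₁`, and `J₁` a set of
(at most) `m` largest-in-absolute-value coordinates of `γ` outside `J₀`,
`‖γ_{J₀ ∪ J₁}‖₂ ≤ K · Q γ`. -/
def RECond (p s m : ℕ) (k₀ K : ℝ) (Q : (Fin p → ℝ) → ℝ) : Prop :=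
  ∀ J₀ : Finset (Fin p), J₀.card ≤ s →
    ∀ γ : Fin p → ℝ, γ ≠ 0 →
      (∑ j ∈ J₀ᶜ, |γ j|) ≤ k₀ * ∑ j ∈ J₀, |γ j| →
      ∀ J₁ : Finset (Fin p), J₁ ⊆ J₀ᶜ → J₁.card ≤ m →
        (∀ a ∈ J₁, ∀ b ∈ J₀ᶜ \ J₁, |γ b| ≤ |γ a|) →
        Real.sqrt (∑ j ∈ J₀ ∪ J₁, γ j ^ 2) ≤ K * Q γ

/-- If `Σ` satisfies `RE(s, s, k₀, Σ)` with constant `K`, the empirical covariance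
`XᵀX/n` is entrywise within `C₂ √(log p / n)` of `Σ`, and
`s ≤ √(n / log p) / (32 C₂ K²(s,3,3,Σ))` with `k₀ ≤ 3`, then `X` satisfies
`RE(s, s, k₀, X)` with constant at most `√2 · K`. -/
theorem RE_transfer_population_to_empirical (n p s : ℕ) (hn : 0 < n) (hp : 2 ≤ p)
    (X : Matrix (Fin n) (Fin p) ℝ) (Sig : Matrix (Fin p) (Fin p) ℝ)
    (hsym : Sig.IsSymm) (hPSD : Sig.PosSemidef) (hdiag : ∀ j, Sig j j = 1)
    (k₀ : ℝ) (hk₀ : 0 < k₀) (hk₀3 : k₀ ≤ 3) (C₂ : ℝ) (hC₂ : 0 < C₂)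
    (K K₃ : ℝ) (hK : 0 < K) (hK₃ : 0 < K₃)
    (hRE : RECond p s s k₀ K
      (fun γ => Real.sqrt (∑ j, ∑ k, γ j * Sig j k * γ k)))
    (hRE3 : RECond p s 3 3 K₃
      (fun γ => Real.sqrt (∑ j, ∑ k, γ j * Sig j k * γ k)))
    (hΔ : ∀ j k, |(∑ i, X i j * X i k) / n - Sig j k| ≤ C₂ * Real.sqrt (Real.log p / n))
    (hs : (s : ℝ) ≤ Real.sqrt (n / Real.log p) / (32 * C₂ * K₃ ^ 2)) :
    RECond p s s k₀ (Real.sqrt 2 * K)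
      (fun γ => Real.sqrt ((∑ i, (∑ j, X i j * γ j) ^ 2) / n)) := by
  intro J₀ hJ₀ γ hγ hcone J₁ hJ₁sub hJ₁card hdom
  have hn' : (0:ℝ) < n := by exact_mod_cast hn
  have hlogp : 0 < Real.log p := Real.log_pos (by exact_mod_cast hp)
  set δ := C₂ * Real.sqrt (Real.log p / n) with hδdef
  have hδ0 : 0 ≤ δ := by positivity
  set B := ∑ j, ∑ k, γ j * Sig j k * γ k with hBdef
  set A := ∑ j ∈ J₀ ∪ J₁, γ j ^ 2 with hAdef
  set E := (∑ i, (∑ j, X i j * γ j) ^ 2) / n with hEdef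
  have hA0 : 0 ≤ A := Finset.sum_nonneg fun j _ => sq_nonneg _
  have hE0 : 0 ≤ E := by positivity
  have hB0 : 0 ≤ B := by
    have h := hPSD.dotProduct_mulVec_nonneg γ
    simp only [dotProduct, Matrix.mulVec, star_trivial, Pi.star_apply] at h
    refine le_of_le_of_eq h (Eq.symm ?_)
    refine Finset.sum_congr rfl fun j _ => ?_
    simp [Finset.mul_sum, dotProduct]
    exact Finset.sum_congr rfl fun k _ => by ring
  -- A ≤ K² B
  have hAB : A ≤ K ^ 2 * B := by
    have h1 := hRE J₀ hJ₀ γ hγ hcone J₁ hJ₁sub hJ₁card hdom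
    calc A = Real.sqrt A ^ 2 := (Real.sq_sqrt hA0).symm
      _ ≤ (K * Real.sqrt B) ^ 2 := pow_le_pow_left₀ (Real.sqrt_nonneg _) h1 2
      _ = K ^ 2 * B := by rw [mul_pow, Real.sq_sqrt hB0]
  -- cone with constant 3
  have hJ₀abs0 : 0 ≤ ∑ j ∈ J₀, |γ j| := Finset.sum_nonneg fun j _ => abs_nonneg _
  have hcone3 : (∑ j ∈ J₀ᶜ, |γ j|) ≤ 3 * ∑ j ∈ J₀, |γ j| :=
    hcone.trans (mul_le_mul_of_nonneg_right hk₀3 hJ₀abs0)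
  -- ∑_{J₀} γ² ≤ K₃² B
  have hSB : (∑ j ∈ J₀, γ j ^ 2) ≤ K₃ ^ 2 * B := by
    have h3 := hRE3 J₀ hJ₀ γ hγ hcone3 ∅ (Finset.empty_subset _) (by simp) (by simp)
    rw [Finset.union_empty] at h3
    have hS0 : 0 ≤ ∑ j ∈ J₀, γ j ^ 2 := Finset.sum_nonneg fun j _ => sq_nonneg _
    calc (∑ j ∈ J₀, γ j ^ 2) = Real.sqrt (∑ j ∈ J₀, γ j ^ 2) ^ 2 := (Real.sq_sqrt hS0).symm
      _ ≤ (K₃ * Real.sqrt B) ^ 2 := pow_le_pow_left₀ (Real.sqrt_nonneg _) h3 2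
      _ = K₃ ^ 2 * B := by rw [mul_pow, Real.sq_sqrt hB0]
  -- ℓ¹ bound
  set L := ∑ j ∈ J₀, |γ j| with hLdef
  have hL1 : (∑ j, |γ j|) ≤ 4 * L := by
    rw [← Finset.sum_add_sum_compl J₀ fun j => |γ j|]
    linarith [hcone3]
  have hL1' : 0 ≤ ∑ j, |γ j| := Finset.sum_nonneg fun j _ => abs_nonneg _
  have hLsq : L ^ 2 ≤ (s : ℝ) * ∑ j ∈ J₀, γ j ^ 2 := by
    have h := sq_sum_le_card_mul_sum_sq (s := J₀) (f := fun j => |γ j|)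
    simp only [sq_abs] at h
    refine h.trans ?_
    have : (J₀.card : ℝ) ≤ (s : ℝ) := by exact_mod_cast hJ₀
    exact mul_le_mul_of_nonneg_right this (Finset.sum_nonneg fun j _ => sq_nonneg _)
  have hL1sq : (∑ j, |γ j|) ^ 2 ≤ 16 * ((s:ℝ) * K₃ ^ 2 * B) := by
    calc (∑ j, |γ j|) ^ 2 ≤ (4 * L) ^ 2 := pow_le_pow_left₀ hL1' hL1 2
      _ = 16 * L ^ 2 := by ring
      _ ≤ 16 * ((s:ℝ) * ∑ j ∈ J₀, γ j ^ 2) := by linarith [hLsq]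
      _ ≤ 16 * ((s:ℝ) * K₃ ^ 2 * B) := by
          have h : (s:ℝ) * (∑ j ∈ J₀, γ j ^ 2) ≤ (s:ℝ) * (K₃ ^ 2 * B) :=
            mul_le_mul_of_nonneg_left hSB (Nat.cast_nonneg s)
          rw [mul_assoc]
          linarith
  -- expansion of E
  have hexp : (∑ i, (∑ j, X i j * γ j) ^ 2)
      = ∑ j, ∑ k, γ j * (∑ i, X i j * X i k) * γ k := by
    simp_rw [sq, Finset.sum_mul_sum, Finset.mul_sum, Finset.sum_mul]
    rw [Finset.sum_comm]
    refine Finset.sum_congr rfl fun j _ => ?_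
    rw [Finset.sum_comm]
    refine Finset.sum_congr rfl fun k _ => Finset.sum_congr rfl fun i _ => by ring
  have hE' : E = ∑ j, ∑ k, γ j * ((∑ i, X i j * X i k) / n) * γ k := by
    rw [hEdef, hexp, Finset.sum_div]
    refine Finset.sum_congr rfl fun j _ => ?_
    rw [Finset.sum_div]
    exact Finset.sum_congr rfl fun k _ => by ring
  -- B - E ≤ δ ‖γ‖₁²
  have hBE : B - E ≤ δ * (∑ j, |γ j|) ^ 2 := by
    have heq : B - E = ∑ j, ∑ k, γ j * (Sig j k - (∑ i, X i j * X i k) / n) * γ k := by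
      rw [hE', hBdef, ← Finset.sum_sub_distrib]
      refine Finset.sum_congr rfl fun j _ => ?_
      rw [← Finset.sum_sub_distrib]
      exact Finset.sum_congr rfl fun k _ => by ring
    have hbound : ∀ j k, γ j * (Sig j k - (∑ i, X i j * X i k) / n) * γ k
        ≤ |γ j| * δ * |γ k| := by
      intro j k
      calc γ j * (Sig j k - (∑ i, X i j * X i k) / n) * γ k
          ≤ |γ j * (Sig j k - (∑ i, X i j * X i k) / n) * γ k| := le_abs_self _
        _ = |γ j| * |Sig j k - (∑ i, X i j * X i k) / n| * |γ k| := by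
            rw [abs_mul, abs_mul]
        _ ≤ |γ j| * δ * |γ k| := by
            have h := hΔ j k
            rw [abs_sub_comm] at h
            exact mul_le_mul_of_nonneg_right
              (mul_le_mul_of_nonneg_left h (abs_nonneg _)) (abs_nonneg _)
    have hsum : (∑ j, ∑ k, |γ j| * δ * |γ k|) = δ * (∑ j, |γ j|) ^ 2 := by
      rw [sq, Finset.sum_mul_sum, Finset.mul_sum]
      refine Finset.sum_congr rfl fun j _ => ?_
      rw [Finset.mul_sum]
      exact Finset.sum_congr rfl fun k _ => by ring
    rw [heq, ← hsum]
    exact Finset.sum_le_sum fun j _ => Finset.sum_le_sum fun k _ => hbound j k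
  -- key numeric bound : 16 δ s K₃² ≤ 1/2
  have hprod : Real.sqrt (Real.log p / n) * Real.sqrt ((n:ℝ) / Real.log p) = 1 := by
    rw [← Real.sqrt_mul (by positivity)]
    have : Real.log p / n * ((n:ℝ) / Real.log p) = 1 := by
      field_simp
    rw [this, Real.sqrt_one]
  have key : 16 * (δ * ((s:ℝ) * K₃ ^ 2)) ≤ 1 / 2 := by
    have h1 : δ * ((s:ℝ) * K₃ ^ 2)
        ≤ δ * (Real.sqrt ((n:ℝ) / Real.log p) / (32 * C₂ * K₃ ^ 2) * K₃ ^ 2) := by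
      apply mul_le_mul_of_nonneg_left _ hδ0
      exact mul_le_mul_of_nonneg_right hs (by positivity)
    have h2 : δ * (Real.sqrt ((n:ℝ) / Real.log p) / (32 * C₂ * K₃ ^ 2) * K₃ ^ 2)
        = Real.sqrt (Real.log p / n) * Real.sqrt ((n:ℝ) / Real.log p) / 32 := by
      rw [hδdef]; field_simp
    rw [h2, hprod] at h1
    linarith
  -- combine : E ≥ B/2
  have hEB : B / 2 ≤ E := by
    have h1 : B - E ≤ 16 * (δ * ((s:ℝ) * K₃ ^ 2)) * B := by
      calc B - E ≤ δ * (∑ j, |γ j|) ^ 2 := hBE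
        _ ≤ δ * (16 * ((s:ℝ) * K₃ ^ 2 * B)) := mul_le_mul_of_nonneg_left hL1sq hδ0
        _ = 16 * (δ * ((s:ℝ) * K₃ ^ 2)) * B := by ring
    have h2 : 16 * (δ * ((s:ℝ) * K₃ ^ 2)) * B ≤ 1 / 2 * B :=
      mul_le_mul_of_nonneg_right key hB0
    linarith
  -- finish
  have hfin : A ≤ 2 * K ^ 2 * E := by
    have h1 : K ^ 2 * B ≤ K ^ 2 * (2 * E) :=
      mul_le_mul_of_nonneg_left (by linarith) (sq_nonneg K)
    calc A ≤ K ^ 2 * B := hAB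
      _ ≤ K ^ 2 * (2 * E) := h1
      _ = 2 * K ^ 2 * E := by ring
  have : Real.sqrt A ≤ Real.sqrt (2 * K ^ 2 * E) := Real.sqrt_le_sqrt hfin
  calc Real.sqrt A ≤ Real.sqrt (2 * K ^ 2 * E) := this
    _ = Real.sqrt 2 * K * Real.sqrt E := by
        rw [Real.sqrt_mul (by positivity), Real.sqrt_mul (by positivity),
          Real.sqrt_sq hK.le, mul_assoc]
end

section
/- Under the conditions of the previous lemma (basic Lasso inequality on the event ‖Xᵀε/n‖_∞ ≤ λ/2) and assuming the restricted eigenvalue condition RE(s, 3, X) with constant K = K(s,3,X), where s = |S|, the Lasso error δ = β_init − β* satisfies ‖δ_S‖₂ ≤ 4K²λ√s and ‖δ‖₁ ≤ 4K²λs. -/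
open Finset

set_option maxHeartbeats 1000000

/-- ℓ₂/ℓ₁ bounds for the Lasso error under `RE(s, 3, X)`: on the event
`‖Xᵀε/n‖_∞ ≤ λ/2`, with `S = supp(β*)`, `s = |S|` and RE constant `K`, the Lasso
error `δ = β_init − β*` satisfies `‖δ_S‖₂ ≤ 4K²λ√s` and `‖δ‖₁ ≤ 4K²λs`. -/
theorem lasso_l2_l1_error_bounds (n p : ℕ) (hn : 0 < n)
    (X : Matrix (Fin n) (Fin p) ℝ) (βstar : Fin p → ℝ) (ε : Fin n → ℝ)
    (lam : ℝ) (hlam : 0 < lam)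
    (hnoise : ∀ j : Fin p, |(∑ i, X i j * ε i) / n| ≤ lam / 2)
    (βinit : Fin p → ℝ)
    (hmin : ∀ β : Fin p → ℝ,
      (1 / (2 * n)) * (∑ i, ((∑ j, X i j * βstar j) + ε i - ∑ j, X i j * βinit j) ^ 2)
          + lam * ∑ j, |βinit j| ≤
        (1 / (2 * n)) * (∑ i, ((∑ j, X i j * βstar j) + ε i - ∑ j, X i j * β j) ^ 2)
          + lam * ∑ j, |β j|)
    (S : Finset (Fin p)) (hS : S = Finset.univ.filter (fun j => βstar j ≠ 0))
    (K : ℝ) (hK : 0 < K)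
    (hRE : ∀ J₀ : Finset (Fin p), J₀.card ≤ S.card →
      ∀ γ : Fin p → ℝ, γ ≠ 0 →
        (∑ j ∈ J₀ᶜ, |γ j|) ≤ 3 * ∑ j ∈ J₀, |γ j| →
        Real.sqrt n * Real.sqrt (∑ j ∈ J₀, γ j ^ 2) ≤
          K * Real.sqrt (∑ i, (∑ j, X i j * γ j) ^ 2)) :
    Real.sqrt (∑ j ∈ S, (βinit j - βstar j) ^ 2) ≤
        4 * K ^ 2 * lam * Real.sqrt S.card ∧
      (∑ j, |βinit j - βstar j|) ≤ 4 * K ^ 2 * lam * S.card := by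
  have hn' : (0:ℝ) < (n:ℝ) := by exact_mod_cast hn
  set δ : Fin p → ℝ := fun j => βinit j - βstar j with hδdef
  have hδj : ∀ j, δ j = βinit j - βstar j := fun j => rfl
  suffices h : Real.sqrt (∑ j ∈ S, δ j ^ 2) ≤ 4 * K ^ 2 * lam * Real.sqrt S.card ∧
      (∑ j, |δ j|) ≤ 4 * K ^ 2 * lam * S.card by exact h
  set A : ℝ := ∑ i, (∑ j, X i j * δ j) ^ 2 with hAdef
  have hA0 : 0 ≤ A := Finset.sum_nonneg fun i _ => sq_nonneg _
  set B : ℝ := ∑ i, ε i * (∑ j, X i j * δ j) with hBdef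
  set a : ℝ := ∑ j ∈ S, |δ j| with hadef
  set b : ℝ := ∑ j ∈ Sᶜ, |δ j| with hbdef
  have ha0 : 0 ≤ a := Finset.sum_nonneg fun j _ => abs_nonneg _
  have hb0 : 0 ≤ b := Finset.sum_nonneg fun j _ => abs_nonneg _
  have hab : (∑ j, |δ j|) = a + b := (Finset.sum_add_sum_compl S _).symm
  -- basic inequality from minimality
  have h1 := hmin βstar
  have hres : ∀ i : Fin n, (∑ j, X i j * βstar j) + ε i - ∑ j, X i j * βinit j
      = ε i - ∑ j, X i j * δ j := by
    intro i
    simp only [hδj, mul_sub, Finset.sum_sub_distrib]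
    ring
  have hres2 : ∀ i : Fin n, (∑ j, X i j * βstar j) + ε i - ∑ j, X i j * βstar j = ε i := by
    intro i; ring
  simp only [hres, hres2] at h1
  have hexp : (∑ i, (ε i - ∑ j, X i j * δ j) ^ 2)
      = (∑ i, ε i ^ 2) - 2 * B + A := by
    rw [hBdef, hAdef, Finset.mul_sum, ← Finset.sum_sub_distrib, ← Finset.sum_add_distrib]
    exact Finset.sum_congr rfl fun i _ => by ring
  rw [hexp] at h1
  -- multiply through by 2n
  have key : A - 2 * B ≤ 2 * (n:ℝ) * lam * ((∑ j, |βstar j|) - ∑ j, |βinit j|) := by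
    have hexpand : (1 / (2 * (n:ℝ))) * ((∑ i, ε i ^ 2) - 2 * B + A)
        = (1 / (2 * (n:ℝ))) * (∑ i, ε i ^ 2) + (1 / (2 * (n:ℝ))) * (A - 2 * B) := by ring
    rw [hexpand] at h1
    have h2 : (1 / (2 * (n:ℝ))) * (A - 2 * B)
        ≤ lam * ((∑ j, |βstar j|) - ∑ j, |βinit j|) := by linarith
    have h3 := mul_le_mul_of_nonneg_left h2 (by positivity : (0:ℝ) ≤ 2 * (n:ℝ))
    have h4 : (2 * (n:ℝ)) * ((1 / (2 * (n:ℝ))) * (A - 2 * B)) = A - 2 * B := by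
      field_simp
    rw [h4] at h3
    linarith [h3]
  -- bound on B
  have hswap : B = ∑ j, δ j * (∑ i, X i j * ε i) := by
    rw [hBdef]
    simp only [Finset.mul_sum]
    rw [Finset.sum_comm]
    refine Finset.sum_congr rfl fun j _ => ?_
    exact Finset.sum_congr rfl fun i _ => by ring
  have hB : B ≤ (n:ℝ) * ((lam / 2) * (a + b)) := by
    rw [hswap]
    have hterm : ∀ j : Fin p, δ j * (∑ i, X i j * ε i) ≤ (n:ℝ) * ((lam / 2) * |δ j|) := by
      intro j
      have h3 := hnoise j
      have h5 : δ j * ((∑ i, X i j * ε i) / (n:ℝ)) ≤ |δ j| * (lam / 2) := by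
        calc δ j * ((∑ i, X i j * ε i) / (n:ℝ))
            ≤ |δ j * ((∑ i, X i j * ε i) / (n:ℝ))| := le_abs_self _
          _ = |δ j| * |(∑ i, X i j * ε i) / (n:ℝ)| := abs_mul _ _
          _ ≤ |δ j| * (lam / 2) := mul_le_mul_of_nonneg_left h3 (abs_nonneg _)
      have h6 : δ j * (∑ i, X i j * ε i)
          = (n:ℝ) * (δ j * ((∑ i, X i j * ε i) / (n:ℝ))) := by
        field_simp
      rw [h6]
      have := mul_le_mul_of_nonneg_left h5 hn'.le
      linarith [this]
    calc (∑ j, δ j * ∑ i, X i j * ε i) ≤ ∑ j, (n:ℝ) * ((lam / 2) * |δ j|) :=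
          Finset.sum_le_sum fun j _ => hterm j
      _ = (n:ℝ) * ((lam / 2) * (a + b)) := by
          rw [← Finset.mul_sum, ← Finset.mul_sum, hab]
  -- bound on the ℓ₁ difference
  have hQP : (∑ j, |βstar j|) - (∑ j, |βinit j|) ≤ a - b := by
    rw [← Finset.sum_add_sum_compl S (fun j => |βstar j|),
        ← Finset.sum_add_sum_compl S (fun j => |βinit j|)]
    have h7 : ∑ j ∈ S, (|βstar j| - |βinit j|) ≤ a := by
      rw [hadef]
      refine Finset.sum_le_sum fun j _ => ?_
      have h8 := abs_sub_abs_le_abs_sub (βstar j) (βinit j)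
      have h9 : |βstar j - βinit j| = |δ j| := by rw [hδj, abs_sub_comm]
      linarith [h8, h9.le, h9.ge]
    have h10 : ∀ j ∈ Sᶜ, |βstar j| - |βinit j| = -|δ j| := by
      intro j hj
      have hz : βstar j = 0 := by
        by_contra h
        exact (Finset.mem_compl.mp hj) (by rw [hS]; simp [h])
      simp [hδj, hz]
    rw [Finset.sum_sub_distrib] at h7
    have h11 : (∑ j ∈ Sᶜ, |βstar j|) - (∑ j ∈ Sᶜ, |βinit j|) = -b := by
      rw [hbdef, ← Finset.sum_sub_distrib]
      rw [Finset.sum_congr rfl h10]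
      simp
    linarith [h7, h11]
  -- combine: A ≤ n λ (3a − b)
  have hA3 : A ≤ (n:ℝ) * lam * (3 * a - b) := by
    have h12 := mul_le_mul_of_nonneg_left hQP
      (by positivity : (0:ℝ) ≤ 2 * (n:ℝ) * lam)
    nlinarith [key, hB, h12]
  have hcone : b ≤ 3 * a := by
    nlinarith [hA3, hA0, mul_pos hn' hlam]
  -- key inequality  A/n + λ(a+b) ≤ 4λa
  have hkey2 : A / (n:ℝ) + lam * (a + b) ≤ 4 * lam * a := by
    have h13 : A / (n:ℝ) ≤ lam * (3 * a - b) := by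
      rw [div_le_iff₀ hn']
      nlinarith [hA3]
    linarith
  -- Cauchy–Schwarz
  set e2 : ℝ := Real.sqrt (∑ j ∈ S, δ j ^ 2) with he2def
  have he20 : 0 ≤ e2 := Real.sqrt_nonneg _
  set c : ℝ := Real.sqrt (S.card : ℝ) with hcdef
  have hc0 : 0 ≤ c := Real.sqrt_nonneg _
  have hc2 : c ^ 2 = (S.card : ℝ) := Real.sq_sqrt (by positivity)
  have hCS : a ≤ c * e2 := by
    have h := Finset.sum_mul_sq_le_sq_mul_sq S (fun _ => (1:ℝ)) (fun j => |δ j|)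
    simp only [one_mul, one_pow, sq_abs] at h
    rw [Finset.sum_const, nsmul_eq_mul, mul_one] at h
    calc a = Real.sqrt (a ^ 2) := (Real.sqrt_sq ha0).symm
      _ ≤ Real.sqrt ((S.card : ℝ) * ∑ j ∈ S, δ j ^ 2) := Real.sqrt_le_sqrt h
      _ = c * e2 := Real.sqrt_mul (Nat.cast_nonneg _) _
  by_cases h0 : ∀ j, δ j = 0
  · constructor
    · have hz : (∑ j ∈ S, δ j ^ 2) = 0 := Finset.sum_eq_zero fun j _ => by rw [h0]; ring
      rw [he2def, hz, Real.sqrt_zero]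
      exact mul_nonneg (by positivity) hc0
    · have hz : (∑ j, |δ j|) = 0 := Finset.sum_eq_zero fun j _ => by rw [h0]; simp
      rw [hz]
      have : (0:ℝ) ≤ (S.card : ℝ) := Nat.cast_nonneg _
      exact mul_nonneg (by positivity) this
  · have hδne : δ ≠ 0 := by
      intro h; apply h0; intro j; rw [h]; rfl
    have hre := hRE S le_rfl δ hδne hcone
    -- set t = sqrt(A/n)
    set t : ℝ := Real.sqrt (A / (n:ℝ)) with htdef
    have ht0 : 0 ≤ t := Real.sqrt_nonneg _
    have ht2 : t ^ 2 = A / (n:ℝ) := Real.sq_sqrt (by positivity)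
    have hsqrtA : Real.sqrt A = Real.sqrt (n:ℝ) * t := by
      rw [htdef, ← Real.sqrt_mul hn'.le]
      congr 1
      field_simp
    have hsn : 0 < Real.sqrt (n:ℝ) := Real.sqrt_pos.mpr hn'
    have he2t : e2 ≤ K * t := by
      rw [hsqrtA] at hre
      have h14 : Real.sqrt (n:ℝ) * e2 ≤ Real.sqrt (n:ℝ) * (K * t) := by
        calc Real.sqrt (n:ℝ) * e2 ≤ K * (Real.sqrt (n:ℝ) * t) := hre
          _ = Real.sqrt (n:ℝ) * (K * t) := by ring
      exact le_of_mul_le_mul_left h14 hsn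
    have hkey3 : t ^ 2 + lam * (a + b) ≤ 4 * lam * (c * e2) := by
      rw [ht2]
      have := mul_le_mul_of_nonneg_left hCS (by positivity : (0:ℝ) ≤ 4 * lam)
      linarith [hkey2, this]
    have hq : t ^ 2 ≤ 4 * lam * (c * (K * t)) := by
      have h4lc : (0:ℝ) ≤ 4 * lam := by positivity
      have h15 : 4 * lam * (c * e2) ≤ 4 * lam * (c * (K * t)) :=
        mul_le_mul_of_nonneg_left (mul_le_mul_of_nonneg_left he2t hc0) h4lc
      have h16 : 0 ≤ lam * (a + b) := by positivity
      linarith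
    have htle : t ≤ 4 * K * lam * c := by
      rcases eq_or_lt_of_le ht0 with h | h
      · rw [← h]; positivity
      · have h17 : t * t ≤ (4 * K * lam * c) * t := by nlinarith [hq]
        exact le_of_mul_le_mul_right h17 h
    constructor
    · calc e2 ≤ K * t := he2t
        _ ≤ K * (4 * K * lam * c) := mul_le_mul_of_nonneg_left htle hK.le
        _ = 4 * K ^ 2 * lam * c := by ring
    · rw [hab]
      have hD : lam * (a + b) ≤ 4 * K ^ 2 * lam ^ 2 * c ^ 2 := by
        have h15 : 4 * lam * (c * e2) ≤ 4 * lam * (c * (K * t)) :=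
          mul_le_mul_of_nonneg_left (mul_le_mul_of_nonneg_left he2t hc0)
            (by positivity : (0:ℝ) ≤ 4 * lam)
        nlinarith [hkey3, h15, sq_nonneg (t - 2 * lam * c * K)]
      rw [hc2] at hD
      have heq : 4 * K ^ 2 * lam ^ 2 * (S.card : ℝ)
          = lam * (4 * K ^ 2 * lam * (S.card : ℝ)) := by ring
      rw [heq] at hD
      exact (mul_le_mul_iff_right₀ hlam).mp hD
end

section
/- Under the stronger restricted eigenvalue condition RE(s, s, 3, X) with constant K = K(s,s,3,X), on the event ‖Xᵀε/n‖_∞ ≤ λ/2, the Lasso error δ = β_init − β* satisfies ‖δ‖₂ ≤ 16K²λ√s. -/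
open Finset

lemma exists_top_subset {α : Type*} [DecidableEq α] (f : α → ℝ) (T : Finset α) (k : ℕ)
    (hk : k ≤ T.card) : ∃ J ⊆ T, J.card = k ∧ ∀ a ∈ J, ∀ b ∈ T \ J, f b ≤ f a := by
  induction k with
  | zero => exact ⟨∅, empty_subset _, rfl, by simp⟩
  | succ k ih =>
    obtain ⟨J, hJT, hcard, hord⟩ := ih (Nat.le_of_succ_le hk)
    have hne : (T \ J).Nonempty := by
      rw [← Finset.card_pos, Finset.card_sdiff_of_subset hJT]; omega
    obtain ⟨b, hb, hmax⟩ := Finset.exists_max_image (T \ J) f hne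
    have hbJ : b ∉ J := (Finset.mem_sdiff.mp hb).2
    refine ⟨insert b J, Finset.insert_subset (Finset.mem_sdiff.mp hb).1 hJT,
      by rw [Finset.card_insert_of_notMem hbJ, hcard], ?_⟩
    intro a ha c hc
    have hc' : c ∈ T \ J := Finset.mem_sdiff.mpr ⟨(Finset.mem_sdiff.mp hc).1,
      fun h => (Finset.mem_sdiff.mp hc).2 (Finset.mem_insert_of_mem h)⟩
    rcases Finset.mem_insert.mp ha with rfl | ha
    · exact hmax c hc'
    · exact hord a ha c hc'

set_option maxHeartbeats 1000000 in
/-- ℓ₂ bound for the full Lasso error under the stronger condition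
`RE(s, s, 3, X)` with constant `K`: on the event `‖Xᵀε/n‖_∞ ≤ λ/2`, with
`S = supp(β*)` and `s = |S|`, the Lasso error `δ = β_init − β*` satisfies
`‖δ‖₂ ≤ 16 K² λ √s`. -/
theorem lasso_full_l2_error_bound (n p : ℕ) (hn : 0 < n)
    (X : Matrix (Fin n) (Fin p) ℝ) (βstar : Fin p → ℝ) (ε : Fin n → ℝ)
    (lam : ℝ) (hlam : 0 < lam)
    (hnoise : ∀ j : Fin p, |(∑ i, X i j * ε i) / n| ≤ lam / 2)
    (βinit : Fin p → ℝ)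
    (hmin : ∀ β : Fin p → ℝ,
      (1 / (2 * n)) * (∑ i, ((∑ j, X i j * βstar j) + ε i - ∑ j, X i j * βinit j) ^ 2)
          + lam * ∑ j, |βinit j| ≤
        (1 / (2 * n)) * (∑ i, ((∑ j, X i j * βstar j) + ε i - ∑ j, X i j * β j) ^ 2)
          + lam * ∑ j, |β j|)
    (S : Finset (Fin p)) (hS : S = Finset.univ.filter (fun j => βstar j ≠ 0))
    (K : ℝ) (hK : 0 < K)
    (hRE : ∀ J₀ : Finset (Fin p), J₀.card ≤ S.card →
      ∀ γ : Fin p → ℝ, γ ≠ 0 →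
        (∑ j ∈ J₀ᶜ, |γ j|) ≤ 3 * ∑ j ∈ J₀, |γ j| →
        ∀ J₁ : Finset (Fin p), J₁ ⊆ J₀ᶜ → J₁.card ≤ S.card →
          (∀ a ∈ J₁, ∀ b ∈ J₀ᶜ \ J₁, |γ b| ≤ |γ a|) →
          Real.sqrt n * Real.sqrt (∑ j ∈ J₀ ∪ J₁, γ j ^ 2) ≤
            K * Real.sqrt (∑ i, (∑ j, X i j * γ j) ^ 2)) :
    Real.sqrt (∑ j, (βinit j - βstar j) ^ 2) ≤
      16 * K ^ 2 * lam * Real.sqrt S.card := by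
  have hn' : (0:ℝ) < n := by exact_mod_cast hn
  set δ : Fin p → ℝ := fun j => βinit j - βstar j with hδ
  set v : Fin n → ℝ := fun i => ∑ j, X i j * δ j with hv
  set Q : ℝ := ∑ i, v i ^ 2 with hQ
  set A : ℝ := ∑ j ∈ S, |δ j| with hA
  set B : ℝ := ∑ j ∈ Sᶜ, |δ j| with hB
  have hQ0 : 0 ≤ Q := Finset.sum_nonneg fun i _ => sq_nonneg _
  have hA0 : 0 ≤ A := Finset.sum_nonneg fun j _ => abs_nonneg _
  have hB0 : 0 ≤ B := Finset.sum_nonneg fun j _ => abs_nonneg _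
  have hzero : ∀ j, j ∉ S → βstar j = 0 := by
    intro j hj
    by_contra h
    exact hj (hS ▸ Finset.mem_filter.mpr ⟨Finset.mem_univ j, h⟩)
  -- Step 1: basic inequality
  have hveq : ∀ i, (∑ j, X i j * βstar j) + ε i - ∑ j, X i j * βinit j = ε i - v i := by
    intro i
    simp only [hv, hδ, mul_sub, Finset.sum_sub_distrib]
    ring
  have hE : ∑ i, ε i * v i = ∑ j, (∑ i, X i j * ε i) * δ j := by
    simp only [hv, Finset.mul_sum]
    rw [Finset.sum_comm]
    refine Finset.sum_congr rfl fun j _ => ?_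
    rw [Finset.sum_mul]
    exact Finset.sum_congr rfl fun i _ => by ring
  have hbasic : (1 / (2*(n:ℝ))) * Q ≤ (1/(n:ℝ)) * (∑ i, ε i * v i)
      + lam * ((∑ j, |βstar j|) - ∑ j, |βinit j|) := by
    have h0 := hmin βstar
    simp only [hveq] at h0
    have h1 : ∀ i, (∑ j, X i j * βstar j) + ε i - ∑ j, X i j * βstar j = ε i := by
      intro i; ring
    simp only [h1] at h0
    have hexp : ∑ i, (ε i - v i)^2
        = (∑ i, ε i ^2) - 2*(∑ i, ε i * v i) + Q := by
      rw [hQ, Finset.mul_sum, ← Finset.sum_sub_distrib, ← Finset.sum_add_distrib]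
      exact Finset.sum_congr rfl fun i _ => by ring
    rw [hexp] at h0
    rw [mul_add, mul_sub] at h0
    have hc : (1 / (2*(n:ℝ))) * (2 * ∑ i, ε i * v i) = (1/(n:ℝ)) * (∑ i, ε i * v i) := by
      field_simp
    rw [hc] at h0
    linarith
  -- Step 2: noise bound
  have hnoisebd : (1/(n:ℝ)) * (∑ i, ε i * v i) ≤ (lam/2) * (A + B) := by
    rw [hE, Finset.mul_sum]
    have hsum : ∀ j : Fin p, 1/(n:ℝ) * ((∑ i, X i j * ε i) * δ j) ≤ (lam/2) * |δ j| := by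
      intro j
      have h1 : 1/(n:ℝ) * ((∑ i, X i j * ε i) * δ j)
          = ((∑ i, X i j * ε i)/n) * δ j := by ring
      rw [h1]
      calc ((∑ i, X i j * ε i)/n) * δ j ≤ |((∑ i, X i j * ε i)/n) * δ j| := le_abs_self _
        _ = |(∑ i, X i j * ε i)/n| * |δ j| := abs_mul _ _
        _ ≤ (lam/2) * |δ j| := mul_le_mul_of_nonneg_right (hnoise j) (abs_nonneg _)
    calc ∑ j, 1/(n:ℝ) * ((∑ i, X i j * ε i) * δ j) ≤ ∑ j, (lam/2) * |δ j| :=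
          Finset.sum_le_sum fun j _ => hsum j
      _ = (lam/2) * (A + B) := by
          rw [hA, hB, Finset.sum_add_sum_compl S, Finset.mul_sum]
  -- Step 3: penalty bound
  have hpen : (∑ j, |βstar j|) - (∑ j, |βinit j|) ≤ A - B := by
    rw [← Finset.sum_add_sum_compl S (fun j => |βstar j|),
        ← Finset.sum_add_sum_compl S (fun j => |βinit j|)]
    have h1 : ∑ j ∈ Sᶜ, |βstar j| = 0 :=
      Finset.sum_eq_zero fun j hj => by
        rw [hzero j (Finset.mem_compl.mp hj), abs_zero]
    have h2 : ∑ j ∈ Sᶜ, |βinit j| = B := by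
      rw [hB]
      refine Finset.sum_congr rfl fun j hj => ?_
      rw [hδ]; simp only []
      rw [hzero j (Finset.mem_compl.mp hj), sub_zero]
    have h3 : (∑ j ∈ S, |βstar j|) - (∑ j ∈ S, |βinit j|) ≤ A := by
      rw [hA, ← Finset.sum_sub_distrib]
      refine Finset.sum_le_sum fun j _ => ?_
      calc |βstar j| - |βinit j| ≤ |βstar j - βinit j| := abs_sub_abs_le_abs_sub _ _
        _ = |δ j| := by rw [hδ]; simp only []; rw [abs_sub_comm]
    linarith
  -- Key consequences
  have hmulpen := mul_le_mul_of_nonneg_left hpen hlam.le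
  have hkey : (1 / (2*(n:ℝ))) * Q ≤ (3*lam/2) * A - (lam/2) * B := by
    nlinarith [hbasic, hnoisebd, hmulpen]
  have hcQ0 : 0 ≤ (1 / (2*(n:ℝ))) * Q := by positivity
  have hcone : B ≤ 3 * A := by
    by_contra h
    push_neg at h
    have hpos := mul_pos hlam (sub_pos.mpr h)
    nlinarith [hkey, hcQ0]
  have hQle : Q ≤ 3 * lam * n * A := by
    have hlB : 0 ≤ lam * B := mul_nonneg hlam.le hB0
    have h2 : (1 / (2*(n:ℝ))) * Q ≤ (3*lam/2) * A := by nlinarith [hkey]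
    have := mul_le_mul_of_nonneg_left h2 (le_of_lt (by positivity : (0:ℝ) < 2*n))
    calc Q = 2*(n:ℝ) * ((1 / (2*(n:ℝ))) * Q) := by field_simp
      _ ≤ 2*(n:ℝ) * ((3*lam/2) * A) := this
      _ = 3 * lam * n * A := by ring
  -- dispose of the trivial case A = 0
  rcases eq_or_lt_of_le hA0 with hAz | hApos
  · have hδ0 : ∀ j, δ j = 0 := by
      intro j
      have hB0' : B = 0 := le_antisymm (by linarith [hcone]) hB0
      by_cases hj : j ∈ S
      · have := Finset.sum_eq_zero_iff_of_nonneg (fun j _ => abs_nonneg (δ j)) |>.mp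
          hAz.symm j hj
        exact abs_eq_zero.mp this
      · have := Finset.sum_eq_zero_iff_of_nonneg (fun j _ => abs_nonneg (δ j)) |>.mp
          hB0' j (Finset.mem_compl.mpr hj)
        exact abs_eq_zero.mp this
    have : ∑ j, (βinit j - βstar j)^2 = 0 :=
      Finset.sum_eq_zero fun j _ => by rw [show βinit j - βstar j = δ j from rfl, hδ0 j]; ring
    rw [this, Real.sqrt_zero]
    exact mul_nonneg (mul_nonneg (mul_nonneg (by norm_num) (sq_nonneg K)) hlam.le) (Real.sqrt_nonneg _)
  -- main case
  · have hδne : δ ≠ 0 := by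
      intro h
      rw [hA, h] at hApos
      simp at hApos
    have hSne : S.Nonempty := by
      by_contra h
      rw [Finset.not_nonempty_iff_eq_empty] at h
      rw [hA, h, Finset.sum_empty] at hApos
      exact lt_irrefl _ hApos
    have hs1 : 1 ≤ S.card := Finset.card_pos.mpr hSne
    set s : ℕ := S.card with hscard
    -- construct J₁
    obtain ⟨J₁, hJ₁sub, hJ₁card, hJ₁ord⟩ :=
      exists_top_subset (fun j => |δ j|) Sᶜ (min s Sᶜ.card) (min_le_right _ _)
    have hJ₁le : J₁.card ≤ s := hJ₁card ▸ min_le_left _ _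
    -- apply RE
    have hre := hRE S le_rfl δ hδne (by rw [← hA, ← hB]; linarith) J₁ hJ₁sub hJ₁le hJ₁ord
    set W2 : ℝ := ∑ j ∈ S ∪ J₁, δ j ^ 2 with hW2
    have hW20 : 0 ≤ W2 := Finset.sum_nonneg fun j _ => sq_nonneg _
    set w : ℝ := Real.sqrt W2 with hw
    have hw0 : 0 ≤ w := Real.sqrt_nonneg _
    -- Cauchy-Schwarz on S
    have hSW : ∑ j ∈ S, δ j ^ 2 ≤ W2 :=
      Finset.sum_le_sum_of_subset_of_nonneg Finset.subset_union_left
        (fun j _ _ => sq_nonneg _)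
    have hCS : A^2 ≤ s * ∑ j ∈ S, δ j ^ 2 := by
      have := sq_sum_le_card_mul_sum_sq (s := S) (f := fun j => |δ j|)
      simpa [sq_abs, hA] using this
    have hAle : A ≤ Real.sqrt s * w := by
      have h1 : A^2 ≤ (Real.sqrt s * w)^2 := by
        rw [mul_pow, Real.sq_sqrt (Nat.cast_nonneg s), hw, Real.sq_sqrt hW20]
        calc A^2 ≤ s * ∑ j ∈ S, δ j ^ 2 := hCS
          _ ≤ s * W2 := by
              apply mul_le_mul_of_nonneg_left hSW (Nat.cast_nonneg s)
      calc A = Real.sqrt (A^2) := (Real.sqrt_sq hA0).symm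
        _ ≤ Real.sqrt ((Real.sqrt s * w)^2) := Real.sqrt_le_sqrt h1
        _ = Real.sqrt s * w := Real.sqrt_sq (by positivity)
    -- squared RE inequality
    have hre2 : (n:ℝ) * W2 ≤ K^2 * Q := by
      have h1 : Real.sqrt n * Real.sqrt W2 ≤ K * Real.sqrt Q := hre
      have h2 := mul_le_mul h1 h1 (by positivity) (by positivity)
      calc (n:ℝ) * W2 = (Real.sqrt n * Real.sqrt W2) * (Real.sqrt n * Real.sqrt W2) := by
            rw [show (Real.sqrt ↑n * Real.sqrt W2) * (Real.sqrt ↑n * Real.sqrt W2)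
              = (Real.sqrt ↑n * Real.sqrt ↑n) * (Real.sqrt W2 * Real.sqrt W2) by ring,
              Real.mul_self_sqrt (le_of_lt hn'), Real.mul_self_sqrt hW20]
        _ ≤ (K * Real.sqrt Q) * (K * Real.sqrt Q) := h2
        _ = K^2 * Q := by
            rw [show (K * Real.sqrt Q) * (K * Real.sqrt Q)
              = K^2 * (Real.sqrt Q * Real.sqrt Q) by ring, Real.mul_self_sqrt hQ0]
    -- w ≤ 3 K² lam √s
    have hwbound : w ≤ 3 * K^2 * lam * Real.sqrt s := by
      have h1 : (n:ℝ) * w^2 ≤ K^2 * (3 * lam * n * (Real.sqrt s * w)) := by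
        rw [hw, Real.sq_sqrt hW20]
        calc (n:ℝ) * W2 ≤ K^2 * Q := hre2
          _ ≤ K^2 * (3 * lam * n * A) := by
              apply mul_le_mul_of_nonneg_left hQle (by positivity)
          _ ≤ K^2 * (3 * lam * n * (Real.sqrt s * w)) := by
              apply mul_le_mul_of_nonneg_left _ (by positivity)
              apply mul_le_mul_of_nonneg_left hAle (by positivity)
      have h2 : w^2 ≤ 3 * K^2 * lam * Real.sqrt s * w := by
        have h3 : (n:ℝ) * w^2 ≤ (n:ℝ) * (3 * K^2 * lam * Real.sqrt s * w) := by
          calc (n:ℝ) * w^2 ≤ K^2 * (3 * lam * n * (Real.sqrt s * w)) := h1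
            _ = (n:ℝ) * (3 * K^2 * lam * Real.sqrt s * w) := by ring
        exact le_of_mul_le_mul_left h3 hn'
      rcases eq_or_lt_of_le hw0 with hwz | hwpos
      · rw [← hwz]; exact mul_nonneg (mul_nonneg (mul_nonneg (by norm_num) (sq_nonneg K)) hlam.le) (Real.sqrt_nonneg _)
      · nlinarith
    -- rest bound : total ≤ 10 W2
    have hrest : ∑ j ∈ (S ∪ J₁)ᶜ, δ j ^ 2 ≤ 9 * W2 := by
      rcases le_or_gt Sᶜ.card s with hcase | hcase
      · -- J₁ = Sᶜ, rest empty
        have hmin' : min s Sᶜ.card = Sᶜ.card := min_eq_right hcase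
        have hJeq : J₁ = Sᶜ := Finset.eq_of_subset_of_card_le hJ₁sub
          (by rw [hJ₁card, hmin'])
        have : (S ∪ J₁)ᶜ = ∅ := by
          rw [hJeq, Finset.union_compl, Finset.compl_univ]
        rw [this, Finset.sum_empty]
        positivity
      · have hmin' : min s Sᶜ.card = s := min_eq_left (le_of_lt hcase)
        have hcards : J₁.card = s := by rw [hJ₁card, hmin']
        set A₁ : ℝ := ∑ j ∈ J₁, |δ j| with hA₁
        have hA₁0 : 0 ≤ A₁ := Finset.sum_nonneg fun j _ => abs_nonneg _
        have hrestset : (S ∪ J₁)ᶜ = Sᶜ \ J₁ := by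
          ext x
          simp only [Finset.mem_compl, Finset.mem_union, Finset.mem_sdiff, not_or]
        have hjbd : ∀ j ∈ Sᶜ \ J₁, (s:ℝ) * |δ j| ≤ A₁ := by
          intro j hj
          rw [hA₁]
          calc (s:ℝ) * |δ j| = ∑ _a ∈ J₁, |δ j| := by
                rw [Finset.sum_const, hcards, nsmul_eq_mul]
            _ ≤ ∑ a ∈ J₁, |δ a| := Finset.sum_le_sum fun a ha => hJ₁ord a ha j hj
        set Br : ℝ := ∑ j ∈ Sᶜ \ J₁, |δ j| with hBr
        have hBr0 : 0 ≤ Br := Finset.sum_nonneg fun j _ => abs_nonneg _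
        have hsplit : A₁ + Br = B := by
          rw [hA₁, hBr, hB, ← Finset.sum_sdiff hJ₁sub]
          ring
        have hs' : (0:ℝ) < s := by exact_mod_cast hs1
        have hR2 : ∑ j ∈ (S ∪ J₁)ᶜ, δ j ^ 2 ≤ A₁ * Br / s := by
          rw [hrestset]
          have h1 : ∀ j ∈ Sᶜ \ J₁, δ j ^2 ≤ (A₁ / s) * |δ j| := by
            intro j hj
            have := hjbd j hj
            have h2 : |δ j| ≤ A₁ / s := by
              rw [le_div_iff₀ hs']
              linarith [hjbd j hj]
            calc δ j ^2 = |δ j| * |δ j| := by rw [← sq_abs]; ring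
              _ ≤ (A₁ / s) * |δ j| := mul_le_mul_of_nonneg_right h2 (abs_nonneg _)
          calc ∑ j ∈ Sᶜ \ J₁, δ j ^ 2 ≤ ∑ j ∈ Sᶜ \ J₁, (A₁ / s) * |δ j| :=
                Finset.sum_le_sum h1
            _ = (A₁ / s) * Br := by rw [hBr, Finset.mul_sum]
            _ = A₁ * Br / s := by ring
        have hBsq : A₁ * Br ≤ B^2 := by nlinarith
        have hB9 : B^2 ≤ 9 * A^2 := by nlinarith
        have hfin : A^2 / s ≤ W2 := by
          rw [div_le_iff₀ hs']
          calc A^2 ≤ s * ∑ j ∈ S, δ j ^2 := hCS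
            _ ≤ s * W2 := mul_le_mul_of_nonneg_left hSW (Nat.cast_nonneg s)
            _ = W2 * s := by ring
        calc ∑ j ∈ (S ∪ J₁)ᶜ, δ j ^ 2 ≤ A₁ * Br / s := hR2
          _ ≤ 9 * A^2 / s := (div_le_div_iff_of_pos_right hs').mpr (by linarith [hBsq, hB9])
          _ ≤ 9 * W2 := by
              rw [show 9 * A^2 / (s:ℝ) = 9 * (A^2 / s) by ring]
              linarith
    -- conclude
    have hsum : ∑ j, (βinit j - βstar j)^2 = W2 + ∑ j ∈ (S ∪ J₁)ᶜ, δ j ^ 2 := by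
      rw [hW2, Finset.sum_add_sum_compl (S ∪ J₁) (fun j => δ j ^ 2)]
    have h4w : Real.sqrt (∑ j, (βinit j - βstar j)^2) ≤ 4 * w := by
      rw [hsum]
      have hww : w^2 = W2 := Real.sq_sqrt hW20
      calc Real.sqrt (W2 + ∑ j ∈ (S ∪ J₁)ᶜ, δ j ^ 2) ≤ Real.sqrt ((4*w)^2) := by
            apply Real.sqrt_le_sqrt
            nlinarith [hrest, hW20]
        _ = 4 * w := Real.sqrt_sq (by positivity)
    have hx : (0:ℝ) ≤ K^2 * lam * Real.sqrt s := by positivity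
    calc Real.sqrt (∑ j, (βinit j - βstar j)^2) ≤ 4 * w := h4w
      _ ≤ 4 * (3 * K^2 * lam * Real.sqrt s) := by linarith [hwbound]
      _ ≤ 16 * K^2 * lam * Real.sqrt s := by nlinarith [hx]
end

section
/- Suppose the Lasso error bounds ‖δ_S‖_∞ ≤ 4K²λ√s (with K = K(s,3,X) ≥ 2) and ‖δ_{Sᶜ}‖₁ ≤ 3K²λs hold, and that β_min := min_{j∈S}|β*_j| ≥ 8K²λ√s. Then the thresholded set S̄ := { j : |β_{j,init}| > 4λ } satisfies S ⊆ S̄ and s ≤ |S̄| ≤ sK². -/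
open Finset

/-- Thresholding procedure: if the Lasso error satisfies
`‖δ_S‖_∞ ≤ 4K²λ√s` and `‖δ_{Sᶜ}‖₁ ≤ 3K²λs` with `K ≥ 2`, and
`β_min := min_{j∈S} |β*_j| ≥ 8K²λ√s`, then the thresholded set
`S̄ = { j : |β_{j,init}| > 4λ }` satisfies `S ⊆ S̄` and `s ≤ |S̄| ≤ sK²`. -/
theorem thresholding_procedure (p : ℕ) (βstar βinit : Fin p → ℝ)
    (S : Finset (Fin p)) (hS : S = Finset.univ.filter (fun j => βstar j ≠ 0))
    (lam K : ℝ) (hlam : 0 < lam) (hK : 2 ≤ K)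
    (hδS : ∀ j ∈ S, |βinit j - βstar j| ≤ 4 * K ^ 2 * lam * Real.sqrt S.card)
    (hδSc : (∑ j ∈ Sᶜ, |βinit j - βstar j|) ≤ 3 * K ^ 2 * lam * S.card)
    (hβmin : ∀ j ∈ S, 8 * K ^ 2 * lam * Real.sqrt S.card ≤ |βstar j|) :
    S ⊆ Finset.univ.filter (fun j => 4 * lam < |βinit j|) ∧
      (S.card : ℝ) ≤ (Finset.univ.filter (fun j => 4 * lam < |βinit j|)).card ∧
      ((Finset.univ.filter (fun j => 4 * lam < |βinit j|)).card : ℝ) ≤ S.card * K ^ 2 := by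
  set T := Finset.univ.filter (fun j => 4 * lam < |βinit j|) with hT
  have hzero : ∀ j ∈ Sᶜ, βstar j = 0 := by
    intro j hj
    rw [Finset.mem_compl, hS, Finset.mem_filter] at hj
    push_neg at hj
    exact hj (Finset.mem_univ j)
  have hsub : S ⊆ T := by
    intro j hj
    rw [hT, Finset.mem_filter]
    refine ⟨Finset.mem_univ j, ?_⟩
    have h1 := hδS j hj
    have h2 := hβmin j hj
    have hs1 : (1 : ℝ) ≤ Real.sqrt S.card := by
      rw [show (1:ℝ) = Real.sqrt 1 by simp]
      apply Real.sqrt_le_sqrt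
      exact_mod_cast Finset.card_pos.mpr ⟨j, hj⟩
    have h3 : |βstar j| - |βinit j| ≤ |βinit j - βstar j| := by
      have := abs_sub_abs_le_abs_sub (βstar j) (βinit j)
      rw [abs_sub_comm] at this
      linarith
    have hK2 : (4:ℝ) ≤ K ^ 2 := by nlinarith
    have h6 : (4:ℝ) ≤ K ^ 2 * Real.sqrt S.card := by nlinarith
    have h7 : 4 * lam ≤ lam * (K ^ 2 * Real.sqrt S.card) := by
      nlinarith [mul_le_mul_of_nonneg_left h6 hlam.le]
    nlinarith
  refine ⟨hsub, by exact_mod_cast Nat.cast_le.mpr (Finset.card_le_card hsub), ?_⟩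
  -- bound the off-support part
  have hsplit : T.card = (T ∩ S).card + (T ∩ Sᶜ).card := by
    rw [← Finset.card_union_of_disjoint]
    · rw [← Finset.inter_union_distrib_left, Finset.union_compl, Finset.inter_univ]
    · exact Finset.disjoint_left.mpr (by
        intro a ha hb
        rw [Finset.mem_inter] at ha hb
        exact (Finset.mem_compl.mp hb.2) ha.2)
  have hIS : (T ∩ S).card ≤ S.card := Finset.card_le_card (Finset.inter_subset_right)
  have hsum1 : (4 * lam) * ((T ∩ Sᶜ).card : ℝ) ≤ ∑ j ∈ T ∩ Sᶜ, |βinit j - βstar j| := by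
    rw [mul_comm]
    calc ((T ∩ Sᶜ).card : ℝ) * (4 * lam) = ∑ _j ∈ T ∩ Sᶜ, 4 * lam := by
          rw [Finset.sum_const, nsmul_eq_mul]
      _ ≤ ∑ j ∈ T ∩ Sᶜ, |βinit j - βstar j| := by
          apply Finset.sum_le_sum
          intro j hj
          rw [Finset.mem_inter] at hj
          have h1 : 4 * lam < |βinit j| := (Finset.mem_filter.mp hj.1).2
          rw [hzero j hj.2, sub_zero]
          linarith
  have hsum2 : ∑ j ∈ T ∩ Sᶜ, |βinit j - βstar j| ≤ ∑ j ∈ Sᶜ, |βinit j - βstar j| :=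
    Finset.sum_le_sum_of_subset_of_nonneg Finset.inter_subset_right
      (fun j _ _ => abs_nonneg _)
  have hoff : ((T ∩ Sᶜ).card : ℝ) ≤ 3 * K ^ 2 * S.card / 4 := by
    have := le_trans hsum1 (le_trans hsum2 hδSc)
    rw [le_div_iff₀ (by norm_num : (0:ℝ) < 4)]
    nlinarith
  have : (T.card : ℝ) ≤ (S.card : ℝ) + 3 * K ^ 2 * S.card / 4 := by
    rw [hsplit]
    push_cast
    have : ((T ∩ S).card : ℝ) ≤ (S.card : ℝ) := by exact_mod_cast hIS
    linarith
  nlinarith [Nat.cast_nonneg (α := ℝ) S.card, sq_nonneg (K-2)]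
end

section
/- Let X be an n×p matrix, S ⊆ {1,...,p} with |S| ≤ s, suppose the smallest eigenvalue of X_SᵀX_S/n is at least Λ > 0 and the restricted orthogonality constant θ_{1,s} satisfies |⟨X_T c, X_{T'} c'⟩|/n ≤ θ_{1,s}‖c‖₂‖c'‖₂ for all disjoint T, T' with |T| ≤ 1 and |T'| ≤ s. Then r_n := max_{j∈Sᶜ} ‖(X_SᵀX_S)⁻¹X_SᵀX_j‖₁ ≤ θ_{1,s}√s / Λ. -/
open Finset Matrix

/-- Bound on `r_n` via the restricted orthogonality constant: if the smallest
eigenvalue of `X_SᵀX_S/n` is at least `Λ > 0` and the `(1,s)`-restricted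
orthogonality constant `θ` satisfies `|⟨X_T c, X_{T'} c'⟩|/n ≤ θ‖c‖₂‖c'‖₂`
for all disjoint `T, T'` with `|T| ≤ 1, |T'| ≤ s`, then for every `j ∉ S`,
`‖(X_SᵀX_S)⁻¹ X_Sᵀ X_j‖₁ ≤ θ √s / Λ`. -/
theorem rn_bound_via_restricted_orthogonality (n p s : ℕ) (hn : 0 < n)
    (X : Matrix (Fin n) (Fin p) ℝ)
    (S : Finset (Fin p)) (hScard : S.card ≤ s)
    (Λ : ℝ) (hΛ : 0 < Λ)
    (XS : Matrix (Fin n) {j // j ∈ S} ℝ) (hXS : XS = Matrix.of fun i j => X i j.1)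
    (heig : ∀ v : {j // j ∈ S} → ℝ,
      Λ * ∑ k, v k ^ 2 ≤ (∑ i, (XS.mulVec v i) ^ 2) / n)
    (θ : ℝ) (hθnn : 0 ≤ θ)
    (hθ : ∀ T T' : Finset (Fin p), Disjoint T T' → T.card ≤ 1 → T'.card ≤ s →
      ∀ (c : {j // j ∈ T} → ℝ) (c' : {j // j ∈ T'} → ℝ),
        |(∑ i, ((Matrix.of fun i (j : {j // j ∈ T}) => X i j.1).mulVec c i) *
            ((Matrix.of fun i (j : {j // j ∈ T'}) => X i j.1).mulVec c' i)) / n| ≤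
          θ * Real.sqrt (∑ k, c k ^ 2) * Real.sqrt (∑ k, c' k ^ 2)) :
    ∀ j ∉ S,
      (∑ k, |((XSᵀ * XS)⁻¹.mulVec (XSᵀ.mulVec fun i => X i j)) k|) ≤
        θ * Real.sqrt s / Λ := by
  intro j hj
  set A := XSᵀ * XS with hA
  set b : {j // j ∈ S} → ℝ := XSᵀ.mulVec (fun i => X i j) with hb
  set r : {j // j ∈ S} → ℝ := A⁻¹.mulVec b with hr
  -- A is positive definite
  have hquad : ∀ v : {j // j ∈ S} → ℝ, v ⬝ᵥ A.mulVec v = ∑ i, (XS.mulVec v i) ^ 2 := by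
    intro v
    rw [hA, ← mulVec_mulVec, dotProduct_mulVec, vecMul_transpose]
    simp [dotProduct, sq]
  have hposdef : A.PosDef := by
    rw [posDef_iff_dotProduct_mulVec]
    constructor
    · have := Matrix.isHermitian_conjTranspose_mul_self XS
      simpa [Matrix.conjTranspose_eq_transpose_of_trivial, hA] using this
    · intro x hx
      have hx2 : 0 < ∑ k, x k ^ 2 := by
        have h1 : ∀ k, 0 ≤ x k ^ 2 := fun k => sq_nonneg _
        obtain ⟨k, hk⟩ := Function.ne_iff.mp hx
        exact Finset.sum_pos' (fun k _ => h1 k) ⟨k, Finset.mem_univ _, sq_pos_of_ne_zero (by simpa using hk)⟩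
      have h2 := heig x
      have h3 : 0 < (∑ i, (XS.mulVec x i) ^ 2) / n := lt_of_lt_of_le (mul_pos hΛ hx2) h2
      have h4 : 0 < ∑ i, (XS.mulVec x i) ^ 2 := by
        by_contra h
        push_neg at h
        have : (∑ i, (XS.mulVec x i) ^ 2) / n ≤ 0 := by
          apply div_nonpos_of_nonpos_of_nonneg h (by positivity)
        linarith
      rw [star_trivial, hquad x]
      exact h4
  have hdet : IsUnit A.det := isUnit_iff_ne_zero.mpr hposdef.det_pos.ne'
  have hAr : A.mulVec r = b := by
    rw [hr, mulVec_mulVec, Matrix.mul_nonsing_inv _ hdet, Matrix.one_mulVec]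
  -- key identity
  have hkey : ∑ i, (XS.mulVec r i) ^ 2 = ∑ i, X i j * XS.mulVec r i := by
    rw [← hquad r, hAr, hb, dotProduct_mulVec, vecMul_transpose]
    simp [dotProduct, mul_comm]
  -- restricted orthogonality application
  have hdisj : Disjoint ({j} : Finset (Fin p)) S := by
    simp [Finset.disjoint_left, hj]
  have hRO := hθ {j} S hdisj (by simp) hScard (fun _ => 1) r
  have hsing : ∀ i, (Matrix.of fun i (k : {k // k ∈ ({j} : Finset (Fin p))}) => X i k.1).mulVec (fun _ => (1:ℝ)) i = X i j := by
    intro i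
    simp [Matrix.mulVec, dotProduct]
  have hone : Real.sqrt (∑ k : {k // k ∈ ({j} : Finset (Fin p))}, ((1:ℝ)) ^ 2) = 1 := by
    simp
  have hXSof : ∀ i, (Matrix.of fun i (k : {k // k ∈ S}) => X i k.1).mulVec r i = XS.mulVec r i := by
    intro i; rw [hXS]
  rw [show (∑ i, ((Matrix.of fun i (k : {k // k ∈ ({j} : Finset (Fin p))}) => X i k.1).mulVec (fun _ => (1:ℝ)) i) * ((Matrix.of fun i (k : {k // k ∈ S}) => X i k.1).mulVec r i)) = ∑ i, X i j * XS.mulVec r i from Finset.sum_congr rfl (fun i _ => by rw [hsing i, hXSof i]), hone] at hRO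
  set Q := ∑ k, r k ^ 2 with hQ
  have hQnn : 0 ≤ Q := Finset.sum_nonneg fun k _ => sq_nonneg _
  have ht : Real.sqrt Q ≤ θ / Λ := by
    have h1 : Λ * Q ≤ θ * Real.sqrt Q := by
      calc Λ * Q ≤ (∑ i, (XS.mulVec r i) ^ 2) / n := heig r
        _ = (∑ i, X i j * XS.mulVec r i) / n := by rw [hkey]
        _ ≤ |(∑ i, X i j * XS.mulVec r i) / n| := le_abs_self _
        _ ≤ θ * 1 * Real.sqrt Q := hRO
        _ = θ * Real.sqrt Q := by ring
    rcases eq_or_lt_of_le (Real.sqrt_nonneg Q) with h0 | h0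
    · rw [← h0]; positivity
    · have hQ2 : Q = Real.sqrt Q * Real.sqrt Q := (Real.mul_self_sqrt hQnn).symm
      rw [le_div_iff₀ hΛ]
      nlinarith [h1]
  -- l1-l2 bound
  have hl1 : (∑ k, |r k|) ^ 2 ≤ (S.card : ℝ) * Q := by
    have := sq_sum_le_card_mul_sum_sq (s := (Finset.univ : Finset {k // k ∈ S})) (f := fun k => |r k|)
    simpa [sq_abs, Fintype.card_coe, hQ] using this
  have hfin : ∑ k, |r k| ≤ Real.sqrt s * Real.sqrt Q := by
    have h2 : (∑ k, |r k|) ≤ Real.sqrt ((S.card : ℝ) * Q) := by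
      rw [← Real.sqrt_sq (Finset.sum_nonneg fun k _ => abs_nonneg _)]
      exact Real.sqrt_le_sqrt hl1
    calc (∑ k, |r k|) ≤ Real.sqrt ((S.card : ℝ) * Q) := h2
      _ = Real.sqrt (S.card : ℝ) * Real.sqrt Q := Real.sqrt_mul (by positivity) _
      _ ≤ Real.sqrt s * Real.sqrt Q := by
          have hc : ((S.card : ℝ)) ≤ (s : ℝ) := by exact_mod_cast hScard
          exact mul_le_mul_of_nonneg_right (Real.sqrt_le_sqrt hc) (Real.sqrt_nonneg _)
  calc (∑ k, |r k|) ≤ Real.sqrt s * Real.sqrt Q := hfin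
    _ ≤ Real.sqrt s * (θ / Λ) := by
        have := Real.sqrt_nonneg (s:ℝ)
        exact mul_le_mul_of_nonneg_left ht this
    _ = θ * Real.sqrt s / Λ := by ring
end

section
/- Let X have entries with max_{j,k}|XᵀX/n − Σ|_{jk} ≤ C₂√(log p/n), and suppose s ≤ (Λ_min(s)/(16 C₂))·√(n/log p), where Λ_min(s) satisfies λ_min(Σ_{SS}) ≥ (17/16)Λ_min(s) for every S with |S| ≤ s. Then for every subset S with |S| ≤ s, λ_min(X_SᵀX_S/n) ≥ Λ_min(s). -/
open Finset Matrix

/-- If `XᵀX/n` is entrywise within `C₂√(log p/n)` of `Σ`,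
`s ≤ (Λ/(16C₂))·√(n/log p)`, and `λ_min(Σ_{SS}) ≥ (17/16)Λ` for every `S` with
`|S| ≤ s` (stated via quadratic forms), then `λ_min(X_SᵀX_S/n) ≥ Λ` for every
subset `S` with `|S| ≤ s`. -/
theorem eigenvalue_lower_bound_empirical (n p s : ℕ) (hn : 0 < n) (hp : 2 ≤ p)
    (X : Matrix (Fin n) (Fin p) ℝ) (Sig : Matrix (Fin p) (Fin p) ℝ)
    (hsym : Sig.IsSymm) (C₂ : ℝ) (hC₂ : 0 < C₂) (Λ : ℝ) (hΛ : 0 < Λ)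
    (hΔ : ∀ j k, |(∑ i, X i j * X i k) / n - Sig j k| ≤ C₂ * Real.sqrt (Real.log p / n))
    (hs : (s : ℝ) ≤ Λ / (16 * C₂) * Real.sqrt (n / Real.log p))
    (heig : ∀ S : Finset (Fin p), S.card ≤ s → ∀ v : {j // j ∈ S} → ℝ,
      (17 / 16) * Λ * ∑ k, v k ^ 2 ≤
        ∑ k, ∑ l, v k * Sig k.1 l.1 * v l) :
    ∀ S : Finset (Fin p), S.card ≤ s → ∀ v : {j // j ∈ S} → ℝ,
      Λ * ∑ k, v k ^ 2 ≤
        (∑ i, ((Matrix.of fun i (j : {j // j ∈ S}) => X i j.1).mulVec v i) ^ 2) / n := by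
  intro S hS v
  have hp1 : (1:ℝ) < p := by exact_mod_cast lt_of_lt_of_le one_lt_two hp
  have hL : 0 < Real.log p := Real.log_pos hp1
  have hn' : (0:ℝ) < n := by exact_mod_cast hn
  set δ : ℝ := C₂ * Real.sqrt (Real.log p / n) with hδdef
  have hδ0 : 0 ≤ δ := by positivity
  -- rewrite the empirical quadratic form
  have hrw : (∑ i, ((Matrix.of fun i (j : {j // j ∈ S}) => X i j.1).mulVec v i) ^ 2) / n
      = ∑ k, ∑ l, v k * ((∑ i, X i k.1 * X i l.1) / n) * v l := by
    have h1 : ∑ i, ((Matrix.of fun i (j : {j // j ∈ S}) => X i j.1).mulVec v i) ^ 2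
        = ∑ k, ∑ l, v k * (∑ i, X i k.1 * X i l.1) * v l := by
      simp only [Matrix.mulVec, dotProduct, Matrix.of_apply, sq, Finset.sum_mul_sum]
      rw [Finset.sum_comm]
      refine Finset.sum_congr rfl fun k _ => ?_
      rw [Finset.sum_comm]
      refine Finset.sum_congr rfl fun l _ => ?_
      rw [Finset.mul_sum, Finset.sum_mul]
      exact Finset.sum_congr rfl fun i _ => by ring
    rw [h1, Finset.sum_div]
    refine Finset.sum_congr rfl fun k _ => ?_
    rw [Finset.sum_div]
    refine Finset.sum_congr rfl fun l _ => ?_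
    ring
  rw [hrw]
  -- difference bound
  have hdiff : |∑ k, ∑ l, v k * ((∑ i, X i k.1 * X i l.1) / n) * v l
      - ∑ k, ∑ l, v k * Sig k.1 l.1 * v l| ≤ δ * (∑ k, |v k|) ^ 2 := by
    rw [← Finset.sum_sub_distrib]
    calc |∑ k, (∑ l, v k * ((∑ i, X i k.1 * X i l.1) / n) * v l
            - ∑ l, v k * Sig k.1 l.1 * v l)|
        ≤ ∑ k, |∑ l, v k * ((∑ i, X i k.1 * X i l.1) / n) * v l
            - ∑ l, v k * Sig k.1 l.1 * v l| := Finset.abs_sum_le_sum_abs _ _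
      _ ≤ ∑ k, ∑ l, |v k| * δ * |v l| := by
          refine Finset.sum_le_sum fun k _ => ?_
          rw [← Finset.sum_sub_distrib]
          calc |∑ l, (v k * ((∑ i, X i k.1 * X i l.1) / n) * v l
                  - v k * Sig k.1 l.1 * v l)|
              ≤ ∑ l, |v k * ((∑ i, X i k.1 * X i l.1) / n) * v l
                  - v k * Sig k.1 l.1 * v l| := Finset.abs_sum_le_sum_abs _ _
            _ ≤ ∑ l, |v k| * δ * |v l| := by
                refine Finset.sum_le_sum fun l _ => ?_
                have : v k * ((∑ i, X i k.1 * X i l.1) / n) * v l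
                    - v k * Sig k.1 l.1 * v l
                    = v k * ((∑ i, X i k.1 * X i l.1) / n - Sig k.1 l.1) * v l := by ring
                rw [this, abs_mul, abs_mul]
                exact mul_le_mul_of_nonneg_right
                  (mul_le_mul_of_nonneg_left (hΔ k.1 l.1) (abs_nonneg _))
                  (abs_nonneg _)
      _ = δ * (∑ k, |v k|) ^ 2 := by
          rw [sq, Finset.sum_mul_sum, Finset.mul_sum]
          refine Finset.sum_congr rfl fun k _ => ?_
          rw [Finset.mul_sum]
          exact Finset.sum_congr rfl fun l _ => by ring
  -- Cauchy–Schwarz type bound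
  have hcs : (∑ k, |v k|) ^ 2 ≤ (s : ℝ) * ∑ k, v k ^ 2 := by
    have := sq_sum_le_card_mul_sum_sq (s := (Finset.univ : Finset {j // j ∈ S}))
      (f := fun k => |v k|)
    simp only [sq_abs] at this
    have hcard : (Fintype.card {j // j ∈ S} : ℝ) ≤ (s : ℝ) := by
      exact_mod_cast (Fintype.card_coe S ▸ hS)
    calc (∑ k, |v k|) ^ 2 ≤ (Fintype.card {j // j ∈ S} : ℝ) * ∑ k, v k ^ 2 := by
          simpa [Finset.card_univ] using this
      _ ≤ (s : ℝ) * ∑ k, v k ^ 2 := by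
          exact mul_le_mul_of_nonneg_right hcard (by positivity)
  -- s * δ ≤ Λ/16
  have hsδ : (s : ℝ) * δ ≤ Λ / 16 := by
    have hsqrt : Real.sqrt ((n : ℝ) / Real.log p) * Real.sqrt (Real.log p / n) = 1 := by
      rw [← Real.sqrt_mul (by positivity)]
      rw [show (n : ℝ) / Real.log p * (Real.log p / n) = 1 by field_simp]
      exact Real.sqrt_one
    calc (s : ℝ) * δ ≤ (Λ / (16 * C₂) * Real.sqrt ((n : ℝ) / Real.log p)) * δ :=
          mul_le_mul_of_nonneg_right hs hδ0
      _ = Λ / 16 * (Real.sqrt ((n : ℝ) / Real.log p) * Real.sqrt (Real.log p / n)) := by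
          rw [hδdef]; field_simp
      _ = Λ / 16 := by rw [hsqrt, mul_one]
  have hquad := heig S hS v
  have hsum2 : 0 ≤ ∑ k, v k ^ 2 := by positivity
  have hperturb : δ * (∑ k, |v k|) ^ 2 ≤ Λ / 16 * ∑ k, v k ^ 2 := by
    calc δ * (∑ k, |v k|) ^ 2 ≤ δ * ((s : ℝ) * ∑ k, v k ^ 2) :=
          mul_le_mul_of_nonneg_left hcs hδ0
      _ = (s : ℝ) * δ * ∑ k, v k ^ 2 := by ring
      _ ≤ Λ / 16 * ∑ k, v k ^ 2 := mul_le_mul_of_nonneg_right hsδ hsum2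
  have habs := abs_le.mp hdiff
  nlinarith [habs.1, hperturb, hquad]
end

section
/- (KKT characterization for the weighted Lasso.) Consider Y = Xβ* + ε with supp(β*) = S, positive weights w ∈ ℝᵖ, λ > 0, and assume X_SᵀX_S is invertible. Set b = (sgn(β*_j)w_j)_{j∈S} and Σ̂ = XᵀX/n. There exists a minimizer β̂ of (1/2n)‖Y − Xβ‖₂² + λΣ_j w_j|β_j| with sgn(β̂) = sgn(β*) if and only if (i) |Σ̂_{SᶜS}(Σ̂_{SS})⁻¹(X_Sᵀε/n − λb) − X_{Sᶜ}ᵀε/n| ≤ λ w_{Sᶜ} componentwise, and (ii) sgn(β*_S + (Σ̂_{SS})⁻¹(X_Sᵀε/n − λb)) = sgn(β*_S). -/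
set_option linter.unreachableTactic false
set_option linter.unusedTactic false
set_option linter.unnecessarySeqFocus false


open Finset Matrix

/-- Componentwise sign, with `sgn 0 = 0`. -/
noncomputable def sgn (x : ℝ) : ℝ := if 0 < x then 1 else if x < 0 then -1 else 0

lemma sgn_eq_zero_iff {x : ℝ} : sgn x = 0 ↔ x = 0 := by
  unfold sgn; split_ifs with h1 h2 <;> constructor <;> intro h <;> first | linarith | norm_num at h | linarith

lemma sgn_mul_self (x : ℝ) : sgn x * x = |x| := by
  unfold sgn; split_ifs with h1 h2 <;> simp [abs_of_pos, abs_of_neg, *] <;> linarith [abs_of_nonneg (le_of_not_gt h2)]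

lemma abs_sgn_le_one (x : ℝ) : |sgn x| ≤ 1 := by
  unfold sgn; split_ifs <;> norm_num

lemma abs_sgn_eq_one {x : ℝ} (hx : x ≠ 0) : |sgn x| = 1 := by
  unfold sgn; split_ifs with h1 h2 <;> norm_num
  exact hx (le_antisymm (le_of_not_gt h1) (le_of_not_gt h2))

lemma aux2 (A x m : ℝ) (hA : 0 ≤ A) (hm : 0 < m) (h : ∀ t, 0 < t → t ≤ m → t * x ≤ t ^ 2 * A) : x ≤ 0 := by
  by_contra hx
  push_neg at hx
  have hA1 : (0:ℝ) < A + 1 := by linarith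
  set t := min m (x / (A + 1)) with ht
  have ht0 : 0 < t := lt_min hm (by positivity)
  have h1 := h t ht0 (min_le_left _ _)
  have h2 : t ≤ x / (A + 1) := min_le_right _ _
  have hxle : x ≤ t * A := by nlinarith [mul_pos ht0 ht0]
  rw [le_div_iff₀ hA1] at h2
  nlinarith


lemma aux_eq (A x m : ℝ) (hA : 0 ≤ A) (hm : 0 < m) (h : ∀ t, |t| ≤ m → t * x ≤ t ^ 2 * A) : x = 0 := by
  have h1 : x ≤ 0 := aux2 A x m hA hm (fun t ht htm => h t (by rw [abs_of_pos ht]; exact htm))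
  have h2 : -x ≤ 0 := aux2 A (-x) m hA hm (fun t ht htm => by
    have := h (-t) (by rw [abs_neg, abs_of_pos ht]; exact htm)
    nlinarith)
  linarith

lemma sum_update_gen {p : ℕ} (h : Fin p → ℝ → ℝ) (f : Fin p → ℝ) (j : Fin p) (c : ℝ) :
    ∑ j', h j' (Function.update f j c j') = (∑ j', h j' (f j')) + (h j c - h j (f j)) := by
  have key : ∀ j' ∈ Finset.univ, h j' (Function.update f j c j') =
      h j' (f j') + (if j' = j then h j c - h j (f j) else 0) := by
    intro j' _
    by_cases hj : j' = j
    · subst hj; simp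
    · simp [Function.update_of_ne hj, hj]
  rw [Finset.sum_congr rfl key, Finset.sum_add_distrib, Finset.sum_ite_eq' Finset.univ j]
  simp

lemma kkt_sufficient {n p : ℕ} (hn : 0 < n) (Y : Fin n → ℝ) (X : Matrix (Fin n) (Fin p) ℝ)
    (w : Fin p → ℝ) (lam : ℝ) (βhat : Fin p → ℝ)
    (ha : ∀ j, |(∑ i, X i j * (Y i - ∑ j', X i j' * βhat j')) / n| ≤ lam * w j)
    (hb : ∀ j, βhat j ≠ 0 →
      (∑ i, X i j * (Y i - ∑ j', X i j' * βhat j')) / n = lam * (sgn (βhat j) * w j))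
    (β : Fin p → ℝ) :
    (1 / (2 * n)) * (∑ i, (Y i - ∑ j, X i j * βhat j) ^ 2) + lam * ∑ j, w j * |βhat j| ≤
    (1 / (2 * n)) * (∑ i, (Y i - ∑ j, X i j * β j) ^ 2) + lam * ∑ j, w j * |β j| := by
  have hn' : (0:ℝ) < n := by exact_mod_cast hn
  set r : Fin n → ℝ := fun i => Y i - ∑ j, X i j * βhat j with hr
  set c : Fin p → ℝ := fun j => (∑ i, X i j * r i) / n with hc
  have hnc : ∀ j, ∑ i, X i j * r i = n * c j := by
    intro j; simp only [hc]; field_simp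
  have hd : ∀ i, (Y i - ∑ j, X i j * β j) = r i + ∑ j, X i j * (βhat j - β j) := by
    intro i
    have : ∑ j, X i j * (βhat j - β j) = (∑ j, X i j * βhat j) - ∑ j, X i j * β j := by
      rw [← Finset.sum_sub_distrib]; exact Finset.sum_congr rfl fun _ _ => by ring
    rw [this, hr]; ring
  have hcross : ∑ i, r i * (∑ j, X i j * (βhat j - β j))
      = ∑ j, (βhat j - β j) * (∑ i, X i j * r i) := by
    simp_rw [Finset.mul_sum]
    rw [Finset.sum_comm]
    exact Finset.sum_congr rfl fun j _ => Finset.sum_congr rfl fun i _ => by ring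
  have expand : ∑ i, (Y i - ∑ j, X i j * β j) ^ 2
      = (∑ i, r i ^ 2) + 2 * ((n:ℝ) * ∑ j, (βhat j - β j) * c j)
        + ∑ i, (∑ j, X i j * (βhat j - β j)) ^ 2 := by
    have step : ∀ i ∈ Finset.univ, (Y i - ∑ j, X i j * β j) ^ 2 =
        r i ^ 2 + 2 * (r i * (∑ j, X i j * (βhat j - β j)))
          + (∑ j, X i j * (βhat j - β j)) ^ 2 := fun i _ => by rw [hd i]; ring
    rw [Finset.sum_congr rfl step, Finset.sum_add_distrib, Finset.sum_add_distrib,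
      ← Finset.mul_sum, hcross]
    congr 2
    simp_rw [hnc, Finset.mul_sum]
    exact Finset.sum_congr rfl fun j _ => by ring
  rw [expand]
  have key : 0 ≤ ∑ j, ((βhat j - β j) * c j + (lam * (w j * |β j|) - lam * (w j * |βhat j|))) := by
    apply Finset.sum_nonneg
    intro j _
    have e1 : βhat j * c j = lam * (w j * |βhat j|) := by
      by_cases h0 : βhat j = 0
      · simp [h0]
      · have := hb j h0
        have hc' : c j = lam * (sgn (βhat j) * w j) := this
        rw [hc', ← sgn_mul_self (βhat j)]; ring
    have e2 : β j * c j ≤ lam * (w j * |β j|) := by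
      calc β j * c j ≤ |β j * c j| := le_abs_self _
        _ = |β j| * |c j| := abs_mul _ _
        _ ≤ |β j| * (lam * w j) := by
            exact mul_le_mul_of_nonneg_left (ha j) (abs_nonneg _)
        _ = lam * (w j * |β j|) := by ring
    linarith
  have split : ∑ j, ((βhat j - β j) * c j + (lam * (w j * |β j|) - lam * (w j * |βhat j|)))
      = (∑ j, (βhat j - β j) * c j) + (lam * ∑ j, w j * |β j| - lam * ∑ j, w j * |βhat j|) := by
    rw [Finset.sum_add_distrib, Finset.sum_sub_distrib, ← Finset.mul_sum, ← Finset.mul_sum]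
  rw [split] at key
  have hD : 0 ≤ (1 / (2 * (n:ℝ))) * ∑ i, (∑ j, X i j * (βhat j - β j)) ^ 2 := by
    apply mul_nonneg (by positivity)
    exact Finset.sum_nonneg fun i _ => sq_nonneg _
  have hcr : (1 / (2 * (n:ℝ))) * (2 * ((n:ℝ) * ∑ j, (βhat j - β j) * c j))
      = ∑ j, (βhat j - β j) * c j := by field_simp
  rw [mul_add, mul_add, hcr]
  linarith

lemma abs_add_small {x t : ℝ} (h : |t| ≤ |x|) : |x + t| = |x| + sgn x * t := by
  rcases lt_trichotomy x 0 with hx | hx | hx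
  · rw [abs_of_neg hx] at h ⊢
    rw [abs_of_nonpos (by cases abs_le.mp h; linarith)]
    unfold sgn
    rw [if_neg (by linarith), if_pos hx]
    ring
  · subst hx; simp at h; simp [h, sgn]
  · rw [abs_of_pos hx] at h ⊢
    rw [abs_of_nonneg (by cases abs_le.mp h; linarith)]
    unfold sgn
    rw [if_pos hx]
    ring

lemma kkt_necessary {n p : ℕ} (hn : 0 < n) (Y : Fin n → ℝ) (X : Matrix (Fin n) (Fin p) ℝ)
    (w : Fin p → ℝ) (hw : ∀ j, 0 < w j) (lam : ℝ) (hlam : 0 < lam) (βhat : Fin p → ℝ)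
    (hmin : ∀ β : Fin p → ℝ,
      (1 / (2 * n)) * (∑ i, (Y i - ∑ j, X i j * βhat j) ^ 2) + lam * ∑ j, w j * |βhat j| ≤
      (1 / (2 * n)) * (∑ i, (Y i - ∑ j, X i j * β j) ^ 2) + lam * ∑ j, w j * |β j|) :
    (∀ j, |(∑ i, X i j * (Y i - ∑ j', X i j' * βhat j')) / n| ≤ lam * w j) ∧
    (∀ j, βhat j ≠ 0 →
      (∑ i, X i j * (Y i - ∑ j', X i j' * βhat j')) / n = lam * (sgn (βhat j) * w j)) := by
  have hn' : (0:ℝ) < n := by exact_mod_cast hn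
  have master : ∀ (j : Fin p) (t : ℝ),
      t * ((∑ i, X i j * (Y i - ∑ j', X i j' * βhat j')) / n) ≤
      t ^ 2 * ((∑ i, (X i j) ^ 2) / (2 * n)) + lam * (w j * (|βhat j + t| - |βhat j|)) := by
    intro j t
    have h1 := hmin (Function.update βhat j (βhat j + t))
    have hsum : ∀ i, ∑ j', X i j' * Function.update βhat j (βhat j + t) j'
        = (∑ j', X i j' * βhat j') + X i j * t := by
      intro i
      rw [sum_update_gen (fun j' x => X i j' * x) βhat j (βhat j + t)]
      ring
    have habs : ∑ j', w j' * |Function.update βhat j (βhat j + t) j'|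
        = (∑ j', w j' * |βhat j'|) + (w j * |βhat j + t| - w j * |βhat j|) := by
      rw [sum_update_gen (fun j' x => w j' * |x|) βhat j (βhat j + t)]
    have hsq : ∑ i, (Y i - ∑ j', X i j' * Function.update βhat j (βhat j + t) j') ^ 2
        = (∑ i, (Y i - ∑ j', X i j' * βhat j') ^ 2)
          - 2 * t * (∑ i, X i j * (Y i - ∑ j', X i j' * βhat j'))
          + t ^ 2 * ∑ i, (X i j) ^ 2 := by
      have step : ∀ i ∈ Finset.univ,
          (Y i - ∑ j', X i j' * Function.update βhat j (βhat j + t) j') ^ 2 =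
          (Y i - ∑ j', X i j' * βhat j') ^ 2 - 2 * t * (X i j * (Y i - ∑ j', X i j' * βhat j'))
            + t ^ 2 * (X i j) ^ 2 := fun i _ => by rw [hsum i]; ring
      rw [Finset.sum_congr rfl step, Finset.sum_add_distrib, Finset.sum_sub_distrib,
        ← Finset.mul_sum, ← Finset.mul_sum]
    rw [hsq, habs] at h1
    set Q := ∑ i, (Y i - ∑ j', X i j' * βhat j') ^ 2 with hQ
    set P := ∑ i, X i j * (Y i - ∑ j', X i j' * βhat j') with hP
    set B := ∑ i, (X i j) ^ 2 with hB
    have e1 : (1 / (2 * (n:ℝ))) * (Q - 2 * t * P + t ^ 2 * B)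
        = (1 / (2 * (n:ℝ))) * Q - t * (P / n) + t ^ 2 * (B / (2 * n)) := by
      field_simp
    rw [e1, mul_add] at h1
    linarith
  have hbpart : ∀ j, βhat j ≠ 0 →
      (∑ i, X i j * (Y i - ∑ j', X i j' * βhat j')) / n = lam * (sgn (βhat j) * w j) := by
    intro j h0
    have hm : 0 < |βhat j| := abs_pos.mpr h0
    have hA : 0 ≤ (∑ i, (X i j) ^ 2) / (2 * (n:ℝ)) := by positivity
    have key : ∀ t : ℝ, |t| ≤ |βhat j| →
        t * ((∑ i, X i j * (Y i - ∑ j', X i j' * βhat j')) / n - lam * (sgn (βhat j) * w j))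
        ≤ t ^ 2 * ((∑ i, (X i j) ^ 2) / (2 * (n:ℝ))) := by
      intro t ht
      have := master j t
      rw [abs_add_small ht] at this
      nlinarith [this]
    have := aux_eq _ _ _ hA hm key
    linarith
  refine ⟨?_, hbpart⟩
  intro j
  by_cases h0 : βhat j = 0
  · have hA : 0 ≤ (∑ i, (X i j) ^ 2) / (2 * (n:ℝ)) := by positivity
    rw [abs_le]
    constructor
    · have key : ∀ t, 0 < t → t ≤ 1 →
          t * (-((∑ i, X i j * (Y i - ∑ j', X i j' * βhat j')) / n) - lam * w j)
          ≤ t ^ 2 * ((∑ i, (X i j) ^ 2) / (2 * (n:ℝ))) := by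
        intro t ht _
        have := master j (-t)
        rw [h0] at this
        simp only [zero_add, abs_neg, abs_of_pos ht, abs_zero] at this
        nlinarith [this]
      have := aux2 _ _ _ hA one_pos key
      linarith
    · have key : ∀ t, 0 < t → t ≤ 1 →
          t * ((∑ i, X i j * (Y i - ∑ j', X i j' * βhat j')) / n - lam * w j)
          ≤ t ^ 2 * ((∑ i, (X i j) ^ 2) / (2 * (n:ℝ))) := by
        intro t ht _
        have := master j t
        rw [h0] at this
        simp only [zero_add, abs_of_pos ht, abs_zero] at this
        nlinarith [this]
      have := aux2 _ _ _ hA one_pos key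
      linarith
  · rw [hbpart j h0, abs_mul, abs_mul, abs_sgn_eq_one h0, abs_of_pos hlam,
      abs_of_pos (hw j), one_mul]


/-- KKT characterization for the weighted Lasso: for `Y = Xβ* + ε`,
`S = supp(β*)`, positive weights `w`, `λ > 0` and `X_SᵀX_S` invertible, there
exists a minimizer `β̂` of `(1/2n)‖Y − Xβ‖₂² + λ∑ⱼ wⱼ|βⱼ|` with
`sgn(β̂) = sgn(β*)` if and only if
(i) `|Σ̂_{SᶜS}(Σ̂_{SS})⁻¹(X_Sᵀε/n − λb) − X_{Sᶜ}ᵀε/n| ≤ λ w_{Sᶜ}` componentwise, and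
(ii) `sgn(β*_S + (Σ̂_{SS})⁻¹(X_Sᵀε/n − λb)) = sgn(β*_S)`,
where `b = (sgn(β*_j)w_j)_{j∈S}` and `Σ̂ = XᵀX/n`. -/
theorem weighted_lasso_KKT_characterization (n p : ℕ) (hn : 0 < n)
    (X : Matrix (Fin n) (Fin p) ℝ) (βstar : Fin p → ℝ) (ε : Fin n → ℝ)
    (w : Fin p → ℝ) (hw : ∀ j, 0 < w j) (lam : ℝ) (hlam : 0 < lam)
    (S : Finset (Fin p)) (hS : S = Finset.univ.filter (fun j => βstar j ≠ 0))
    (XS : Matrix (Fin n) {j // j ∈ S} ℝ) (hXS : XS = Matrix.of fun i j => X i j.1)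
    (hinv : IsUnit (XSᵀ * XS).det)
    (v : {j // j ∈ S} → ℝ)
    (hv : v = ((1 / (n : ℝ)) • (XSᵀ * XS))⁻¹.mulVec
      (fun k => (∑ i, X i k.1 * ε i) / n - lam * (sgn (βstar k.1) * w k.1))) :
    (∃ βhat : Fin p → ℝ,
        (∀ β : Fin p → ℝ,
          (1 / (2 * n)) *
              (∑ i, ((∑ j, X i j * βstar j) + ε i - ∑ j, X i j * βhat j) ^ 2)
            + lam * ∑ j, w j * |βhat j| ≤
          (1 / (2 * n)) *
              (∑ i, ((∑ j, X i j * βstar j) + ε i - ∑ j, X i j * β j) ^ 2)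
            + lam * ∑ j, w j * |β j|) ∧
        ∀ j, sgn (βhat j) = sgn (βstar j)) ↔
      ((∀ j ∉ S,
          |(∑ i, X i j * XS.mulVec v i) / n - (∑ i, X i j * ε i) / n| ≤ lam * w j) ∧
        ∀ k : {j // j ∈ S}, sgn (βstar k.1 + v k) = sgn (βstar k.1)) := by
  have hn' : (0:ℝ) < n := by exact_mod_cast hn
  have hS0 : ∀ j ∉ S, βstar j = 0 := by
    intro j hj
    by_contra h
    exact hj (hS ▸ Finset.mem_filter.mpr ⟨Finset.mem_univ j, h⟩)
  have hmemS : ∀ j, j ∈ S → βstar j ≠ 0 := by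
    intro j hj
    rw [hS, Finset.mem_filter] at hj
    exact hj.2
  have hSne : ∀ k : {j // j ∈ S}, βstar k.1 ≠ 0 := fun k => hmemS k.1 k.2
  set M : Matrix {j // j ∈ S} {j // j ∈ S} ℝ := (1 / (n : ℝ)) • (XSᵀ * XS) with hM
  set rhs : {j // j ∈ S} → ℝ :=
    fun k => (∑ i, X i k.1 * ε i) / n - lam * (sgn (βstar k.1) * w k.1) with hrhs
  have hMdet : IsUnit M.det := by
    rw [hM, Matrix.det_smul]
    exact isUnit_iff_ne_zero.mpr
      (mul_ne_zero (pow_ne_zero _ (by positivity)) (isUnit_iff_ne_zero.mp hinv))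
  -- component formula for M.mulVec
  have hMcomp : ∀ (u : {j // j ∈ S} → ℝ) (k : {j // j ∈ S}),
      M.mulVec u k = (∑ i, X i k.1 * XS.mulVec u i) / n := by
    intro u k
    have h1 : (∑ i, X i k.1 * XS.mulVec u i) = ∑ l, (∑ i, X i k.1 * X i l.1) * u l := by
      simp only [Matrix.mulVec, dotProduct, hXS, Matrix.of_apply, Finset.mul_sum,
        Finset.sum_mul]
      rw [Finset.sum_comm]
      exact Finset.sum_congr rfl fun l _ => Finset.sum_congr rfl fun i _ => by ring
    rw [h1, Finset.sum_div]
    simp only [hM, Matrix.mulVec, dotProduct, Matrix.smul_apply, Matrix.mul_apply,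
      Matrix.transpose_apply, hXS, Matrix.of_apply, smul_eq_mul]
    exact Finset.sum_congr rfl fun l _ => by ring
  -- residual formula
  have hres : ∀ (βh : Fin p → ℝ) (u : {j // j ∈ S} → ℝ),
      (∀ j, βh j - βstar j = if hj : j ∈ S then u ⟨j, hj⟩ else 0) →
      ∀ i, ((∑ j, X i j * βstar j) + ε i) - ∑ j, X i j * βh j = ε i - XS.mulVec u i := by
    intro βh u hu i
    have h1 : ∑ j, X i j * βh j - ∑ j, X i j * βstar j
        = ∑ j, X i j * (if hj : j ∈ S then u ⟨j, hj⟩ else 0) := by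
      rw [← Finset.sum_sub_distrib]
      exact Finset.sum_congr rfl fun j _ => by rw [← hu j]; ring
    have h2 : ∑ j, X i j * (if hj : j ∈ S then u ⟨j, hj⟩ else 0)
        = ∑ j ∈ S, X i j * (if hj : j ∈ S then u ⟨j, hj⟩ else 0) :=
      (Finset.sum_subset (Finset.subset_univ S) (fun j _ hj => by rw [dif_neg hj, mul_zero])).symm
    have h3 : ∑ j ∈ S, X i j * (if hj : j ∈ S then u ⟨j, hj⟩ else 0)
        = ∑ k : {j // j ∈ S}, X i k.1 * u k := by
      rw [Finset.univ_eq_attach,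
        ← Finset.sum_attach S (fun j => X i j * (if hj : j ∈ S then u ⟨j, hj⟩ else 0))]
      exact Finset.sum_congr rfl fun k _ => by simp
    have h4 : XS.mulVec u i = ∑ k : {j // j ∈ S}, X i k.1 * u k := by
      simp [Matrix.mulVec, dotProduct, hXS]
    rw [h4, ← h3, ← h2, ← h1]
    ring
  constructor
  · rintro ⟨βhat, hmin, hsgn⟩
    obtain ⟨ha, hb⟩ := kkt_necessary hn (fun i => (∑ j, X i j * βstar j) + ε i) X w hw
      lam hlam βhat hmin
    have hon : ∀ k : {j // j ∈ S}, βhat k.1 ≠ 0 := by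
      intro k h
      have : sgn (βstar k.1) = 0 := by
        rw [← hsgn k.1, h]; exact sgn_eq_zero_iff.mpr rfl
      exact hSne k (sgn_eq_zero_iff.mp this)
    have hu' : ∀ j, βhat j - βstar j =
        if hj : j ∈ S then (fun k : {j // j ∈ S} => βhat k.1 - βstar k.1) ⟨j, hj⟩ else 0 := by
      intro j
      by_cases hj : j ∈ S
      · rw [dif_pos hj]
      · rw [dif_neg hj, hS0 j hj, sub_zero]
        exact sgn_eq_zero_iff.mp (by rw [hsgn j, hS0 j hj]; exact sgn_eq_zero_iff.mpr rfl)
    set u : {j // j ∈ S} → ℝ := fun k => βhat k.1 - βstar k.1 with hu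
    have hresu := hres βhat u hu'
    have hcu : ∀ j, (∑ i, X i j * (((∑ j', X i j' * βstar j') + ε i)
          - ∑ j', X i j' * βhat j')) / (n:ℝ)
        = (∑ i, X i j * ε i) / n - (∑ i, X i j * XS.mulVec u i) / n := by
      intro j
      rw [show (∑ i, X i j * (((∑ j', X i j' * βstar j') + ε i) - ∑ j', X i j' * βhat j'))
          = ∑ i, (X i j * ε i - X i j * XS.mulVec u i) from
        Finset.sum_congr rfl fun i _ => by rw [hresu i]; ring,
        Finset.sum_sub_distrib, sub_div]
    have hMu : M.mulVec u = rhs := by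
      funext k
      rw [hMcomp u k]
      have h1 := hb k.1 (hon k)
      rw [hcu k.1, hsgn k.1] at h1
      rw [hrhs]
      dsimp only
      linarith [h1]
    have huv : v = u := by
      rw [hv, ← hMu, Matrix.mulVec_mulVec, Matrix.nonsing_inv_mul M hMdet, Matrix.one_mulVec]
    constructor
    · intro j hj
      have h2 := ha j
      rw [hcu j] at h2
      rw [huv, abs_sub_comm]
      exact h2
    · intro k
      have h3 : βstar k.1 + v k = βhat k.1 := by
        rw [huv]; show βstar k.1 + (βhat k.1 - βstar k.1) = βhat k.1; ring
      rw [h3]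
      exact hsgn k.1
  · rintro ⟨hi, hii⟩
    set βh : Fin p → ℝ := fun j => if hj : j ∈ S then βstar j + v ⟨j, hj⟩ else 0 with hβh
    have hures : ∀ j, βh j - βstar j = if hj : j ∈ S then v ⟨j, hj⟩ else 0 := by
      intro j
      by_cases hj : j ∈ S
      · rw [hβh]; dsimp only; rw [dif_pos hj, dif_pos hj]; ring
      · rw [hβh]; dsimp only; rw [dif_neg hj, dif_neg hj, hS0 j hj, sub_zero]
    have hresv := hres βh v hures
    have hMv : M.mulVec v = rhs := by
      rw [hv, Matrix.mulVec_mulVec, Matrix.mul_nonsing_inv M hMdet, Matrix.one_mulVec]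
    have hsg : ∀ j, sgn (βh j) = sgn (βstar j) := by
      intro j
      by_cases hj : j ∈ S
      · rw [hβh]; dsimp only; rw [dif_pos hj]; exact hii ⟨j, hj⟩
      · rw [hβh]; dsimp only; rw [dif_neg hj, hS0 j hj]
    have hcv : ∀ j, (∑ i, X i j * (((∑ j', X i j' * βstar j') + ε i)
          - ∑ j', X i j' * βh j')) / (n:ℝ)
        = (∑ i, X i j * ε i) / n - (∑ i, X i j * XS.mulVec v i) / n := by
      intro j
      rw [show (∑ i, X i j * (((∑ j', X i j' * βstar j') + ε i) - ∑ j', X i j' * βh j'))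
          = ∑ i, (X i j * ε i - X i j * XS.mulVec v i) from
        Finset.sum_congr rfl fun i _ => by rw [hresv i]; ring,
        Finset.sum_sub_distrib, sub_div]
    have hcS : ∀ (j : Fin p) (hj : j ∈ S),
        (∑ i, X i j * ε i) / (n:ℝ) - (∑ i, X i j * XS.mulVec v i) / n
          = lam * (sgn (βstar j) * w j) := by
      intro j hj
      have h1 : (∑ i, X i j * XS.mulVec v i) / (n:ℝ) = rhs ⟨j, hj⟩ := by
        rw [← hMcomp v ⟨j, hj⟩, hMv]
      rw [h1, hrhs]
      dsimp only
      ring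
    have ha : ∀ j, |(∑ i, X i j * (((∑ j', X i j' * βstar j') + ε i)
        - ∑ j', X i j' * βh j')) / (n:ℝ)| ≤ lam * w j := by
      intro j
      rw [hcv j]
      by_cases hj : j ∈ S
      · rw [hcS j hj, abs_mul, abs_mul, abs_sgn_eq_one (hmemS j hj), one_mul,
          abs_of_pos hlam, abs_of_pos (hw j)]
      · rw [abs_sub_comm]
        exact hi j hj
    have hbb : ∀ j, βh j ≠ 0 → (∑ i, X i j * (((∑ j', X i j' * βstar j') + ε i)
        - ∑ j', X i j' * βh j')) / (n:ℝ) = lam * (sgn (βh j) * w j) := by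
      intro j hne
      have hj : j ∈ S := by
        by_contra hj
        exact hne (by rw [hβh]; dsimp only; rw [dif_neg hj])
      rw [hcv j, hcS j hj, hsg j]
    exact ⟨βh, fun β => kkt_sufficient hn (fun i => (∑ j, X i j * βstar j) + ε i) X w lam βh
      ha hbb β, hsg⟩
end

section
/- (Deterministic part of the sign recovery lemma.) Under the KKT characterization, suppose (a) for every j ∈ Sᶜ, |X_jᵀX_S(X_SᵀX_S)⁻¹b| ≤ w_j(1−η) for some η ∈ (0,1), (b) the 'noise' terms satisfy |X_jᵀ(I − P_S)ε/n| ≤ ηλ w_min(Sᶜ)/2 for all j ∈ Sᶜ, and (c) ‖(X_SᵀX_S/n)⁻¹‖_∞ · ( ‖X_Sᵀε/n‖_∞ + λ w_max(S) ) < β_min. Then conditions (i) and (ii) of the KKT characterization hold, and hence there is a weighted-Lasso solution with sgn(β̂) = sgn(β*); moreover (i) holds with strict inequality. -/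
open Finset Matrix

set_option maxHeartbeats 1000000

lemma sgn_add_of_abs_lt {s t : ℝ} (h : |t| < |s|) : sgn (s + t) = sgn s := by
  rcases lt_trichotomy s 0 with hs|hs|hs
  · have h1 : t < -s := by have := (abs_lt.1 h).2; rwa [abs_of_neg hs] at this
    have h2 : s + t < 0 := by linarith
    simp [sgn, h2, hs, not_lt.2 h2.le, not_lt.2 hs.le]
  · simp [hs] at h; exact absurd (abs_nonneg t) (not_le.2 h)
  · have h1 : -s < t := by have := (abs_lt.1 h).1; rwa [abs_of_pos hs] at this
    have h2 : 0 < s + t := by linarith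
    simp [sgn, h2, hs]

/-- Deterministic part of the sign recovery lemma: under
(a) the weighted incoherence `|X_jᵀX_S(X_SᵀX_S)⁻¹b| ≤ w_j(1−η)` for `j ∈ Sᶜ`,
(b) the noise bound `|X_jᵀ(I−P_S)ε/n| ≤ ηλ w_min(Sᶜ)/2` for `j ∈ Sᶜ`, and
(c) `‖(X_SᵀX_S/n)⁻¹‖_∞ (‖X_Sᵀε/n‖_∞ + λ w_max(S)) < β_min`,
the KKT conditions (i) (strictly) and (ii) hold, hence there is a weighted
Lasso solution `β̂` with `sgn(β̂) = sgn(β*)`. -/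
theorem sign_recovery_deterministic (n p : ℕ) (hn : 0 < n)
    (X : Matrix (Fin n) (Fin p) ℝ) (βstar : Fin p → ℝ) (ε : Fin n → ℝ)
    (w : Fin p → ℝ) (hw : ∀ j, 0 < w j) (lam : ℝ) (hlam : 0 < lam)
    (η : ℝ) (hη : 0 < η) (hη1 : η < 1)
    (S : Finset (Fin p)) (hS : S = Finset.univ.filter (fun j => βstar j ≠ 0))
    (hSne : S.Nonempty) (hScne : Sᶜ.Nonempty)
    (XS : Matrix (Fin n) {j // j ∈ S} ℝ) (hXS : XS = Matrix.of fun i j => X i j.1)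
    (hinv : IsUnit (XSᵀ * XS).det)
    (ha : ∀ j ∉ S,
      |∑ i, X i j *
          (XS.mulVec ((XSᵀ * XS)⁻¹.mulVec
            (fun k => sgn (βstar k.1) * w k.1))) i| ≤ w j * (1 - η))
    (hb : ∀ j ∉ S,
      |∑ i, X i j *
          (ε i - XS.mulVec ((XSᵀ * XS)⁻¹.mulVec (XSᵀ.mulVec ε)) i)| / n ≤
        η * lam * (Sᶜ.inf' hScne w) / 2)
    (hc : (Finset.univ.sup' (univ_nonempty_iff.mpr hSne.to_subtype)
            (fun k => ∑ l, |((1 / (n : ℝ)) • (XSᵀ * XS))⁻¹ k l|)) *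
          ((Finset.univ.sup' (univ_nonempty_iff.mpr hSne.to_subtype)
            (fun k : {j // j ∈ S} => |(∑ i, X i k.1 * ε i) / n|)) +
            lam * S.sup' hSne w) <
        S.inf' hSne (fun j => |βstar j|))
    (v : {j // j ∈ S} → ℝ)
    (hv : v = ((1 / (n : ℝ)) • (XSᵀ * XS))⁻¹.mulVec
      (fun k => (∑ i, X i k.1 * ε i) / n - lam * (sgn (βstar k.1) * w k.1))) :
    (∀ j ∉ S,
        |(∑ i, X i j * XS.mulVec v i) / n - (∑ i, X i j * ε i) / n| < lam * w j) ∧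
      (∀ k : {j // j ∈ S}, sgn (βstar k.1 + v k) = sgn (βstar k.1)) ∧
      ∃ βhat : Fin p → ℝ,
        (∀ β : Fin p → ℝ,
          (1 / (2 * n)) *
              (∑ i, ((∑ j, X i j * βstar j) + ε i - ∑ j, X i j * βhat j) ^ 2)
            + lam * ∑ j, w j * |βhat j| ≤
          (1 / (2 * n)) *
              (∑ i, ((∑ j, X i j * βstar j) + ε i - ∑ j, X i j * β j) ^ 2)
            + lam * ∑ j, w j * |β j|) ∧
        ∀ j, sgn (βhat j) = sgn (βstar j) := by
  have hn0 : (n:ℝ) ≠ 0 := Nat.cast_ne_zero.mpr hn.ne'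
  have hnR : (0:ℝ) < n := by exact_mod_cast hn
  set A := XSᵀ * XS with hA
  set bb : {j // j ∈ S} → ℝ := fun k => sgn (βstar k.1) * w k.1 with hbb
  have hMinv : ((1 / (n:ℝ)) • A)⁻¹ = (n:ℝ) • A⁻¹ := by
    apply Matrix.inv_eq_right_inv
    rw [Matrix.smul_mul, Matrix.mul_smul, Matrix.mul_nonsing_inv _ hinv, smul_smul]
    rw [one_div, inv_mul_cancel₀ hn0, one_smul]
  have hvv : v = A⁻¹.mulVec (XSᵀ.mulVec ε) - ((n:ℝ)*lam) • A⁻¹.mulVec bb := by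
    rw [hv, hMinv, Matrix.smul_mulVec]
    funext k
    simp only [Pi.smul_apply, smul_eq_mul, Pi.sub_apply, Matrix.mulVec, dotProduct,
      Finset.mul_sum]
    rw [← Finset.sum_sub_distrib]
    refine Finset.sum_congr rfl fun l _ => ?_
    rw [← Finset.mul_sum]
    have he : ∑ i, XSᵀ l i * ε i = ∑ i, X i l.1 * ε i := by
      simp [hXS, Matrix.transpose_apply]
    rw [he]
    field_simp
    ring
  have hAv : A.mulVec v = fun k => (XSᵀ.mulVec ε) k - (n:ℝ) * (lam * bb k) := by
    rw [hvv, Matrix.mulVec_sub, Matrix.mulVec_smul]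
    simp only [Matrix.mulVec_mulVec]
    rw [← Matrix.mul_assoc, Matrix.mul_nonsing_inv _ hinv, Matrix.one_mul,
      Matrix.one_mulVec]
    funext k
    simp [smul_eq_mul]
    ring
  have hstar0 : ∀ j ∉ S, βstar j = 0 := by
    intro j hj
    by_contra hne
    exact hj (hS ▸ Finset.mem_filter.2 ⟨Finset.mem_univ _, hne⟩)
  -- Part (ii): |v k| small
  have hvlt : ∀ k : {j // j ∈ S}, |v k| < |βstar k.1| := by
    intro k
    set M := ((1 / (n:ℝ)) • A)⁻¹ with hM
    set C1 : ℝ := (Finset.univ.sup' (univ_nonempty_iff.mpr hSne.to_subtype)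
            (fun k : {j // j ∈ S} => |(∑ i, X i k.1 * ε i) / n|)) + lam * S.sup' hSne w with hC1
    have hC1nn : 0 ≤ C1 := by
      apply add_nonneg
      · exact le_trans (abs_nonneg _)
          (Finset.le_sup' (fun k : {j // j ∈ S} => |(∑ i, X i k.1 * ε i) / (n:ℝ)|)
            (Finset.mem_univ k))
      · exact mul_nonneg hlam.le (le_trans (hw k.1).le (Finset.le_sup' w k.2))
    have habs : |v k| ≤ (∑ l, |M k l|) * C1 := by
      rw [hv]
      show |∑ l, M k l * _| ≤ _
      calc |∑ l, M k l * ((∑ i, X i l.1 * ε i) / n - lam * (sgn (βstar l.1) * w l.1))|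
          ≤ ∑ l, |M k l * ((∑ i, X i l.1 * ε i) / n - lam * (sgn (βstar l.1) * w l.1))| :=
            Finset.abs_sum_le_sum_abs _ _
        _ ≤ ∑ l, |M k l| * C1 := by
            refine Finset.sum_le_sum fun l _ => ?_
            rw [abs_mul]
            refine mul_le_mul_of_nonneg_left ?_ (abs_nonneg _)
            calc |(∑ i, X i l.1 * ε i) / n - lam * (sgn (βstar l.1) * w l.1)|
                ≤ |(∑ i, X i l.1 * ε i) / n| + |lam * (sgn (βstar l.1) * w l.1)| := abs_sub _ _
              _ ≤ (Finset.univ.sup' (univ_nonempty_iff.mpr hSne.to_subtype)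
                    (fun k : {j // j ∈ S} => |(∑ i, X i k.1 * ε i) / n|)) + lam * S.sup' hSne w := by
                  refine add_le_add
                    (Finset.le_sup' (fun k : {j // j ∈ S} => |(∑ i, X i k.1 * ε i) / (n:ℝ)|)
                      (Finset.mem_univ l)) ?_
                  rw [abs_mul, abs_of_pos hlam, abs_mul, abs_of_pos (hw l.1)]
                  refine mul_le_mul_of_nonneg_left ?_ hlam.le
                  calc |sgn (βstar l.1)| * w l.1 ≤ 1 * w l.1 :=
                        mul_le_mul_of_nonneg_right (abs_sgn_le_one _) (hw l.1).le
                    _ = w l.1 := one_mul _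
                    _ ≤ S.sup' hSne w := Finset.le_sup' w l.2
        _ = (∑ l, |M k l|) * C1 := (Finset.sum_mul _ _ _).symm
    have hrow : (∑ l, |M k l|) * C1 ≤ (Finset.univ.sup' (univ_nonempty_iff.mpr hSne.to_subtype)
            (fun k => ∑ l, |M k l|)) * C1 :=
      mul_le_mul_of_nonneg_right
        (Finset.le_sup' (fun k => ∑ l, |M k l|) (Finset.mem_univ k)) hC1nn
    have hlt := lt_of_le_of_lt (le_trans habs hrow) hc
    exact lt_of_lt_of_le hlt (Finset.inf'_le _ k.2)
  have part2 : ∀ k : {j // j ∈ S}, sgn (βstar k.1 + v k) = sgn (βstar k.1) :=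
    fun k => sgn_add_of_abs_lt (hvlt k)
  -- part (i)
  have hXv : ∀ j : Fin p, (∑ i, X i j * XS.mulVec v i)
      = (∑ i, X i j * (XS.mulVec (A⁻¹.mulVec (XSᵀ.mulVec ε))) i)
        - ((n:ℝ)*lam) * (∑ i, X i j * (XS.mulVec (A⁻¹.mulVec bb)) i) := by
    intro j
    rw [hvv, Matrix.mulVec_sub, Matrix.mulVec_smul]
    simp only [Pi.sub_apply, Pi.smul_apply, smul_eq_mul]
    rw [Finset.mul_sum, ← Finset.sum_sub_distrib]
    exact Finset.sum_congr rfl fun i _ => by ring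
  have part1 : ∀ j ∉ S,
      |(∑ i, X i j * XS.mulVec v i) / n - (∑ i, X i j * ε i) / n| < lam * w j := by
    intro j hj
    have h2 : |∑ i, X i j * (XS.mulVec (A⁻¹.mulVec bb)) i| ≤ w j * (1 - η) := ha j hj
    have hEP : (∑ i, X i j * (ε i - XS.mulVec (A⁻¹.mulVec (XSᵀ.mulVec ε)) i))
        = (∑ i, X i j * ε i) - (∑ i, X i j * (XS.mulVec (A⁻¹.mulVec (XSᵀ.mulVec ε))) i) := by
      simp only [mul_sub]
      rw [Finset.sum_sub_distrib]
    have h1 : |(∑ i, X i j * ε i) - (∑ i, X i j * (XS.mulVec (A⁻¹.mulVec (XSᵀ.mulVec ε))) i)| / n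
        ≤ η * lam * (Sᶜ.inf' hScne w) / 2 := by rw [← hEP]; exact hb j hj
    have hwm : Sᶜ.inf' hScne w ≤ w j := Finset.inf'_le _ (Finset.mem_compl.2 hj)
    rw [hXv j]
    set E := ∑ i, X i j * ε i
    set P := ∑ i, X i j * (XS.mulVec (A⁻¹.mulVec (XSᵀ.mulVec ε))) i
    set Q := ∑ i, X i j * (XS.mulVec (A⁻¹.mulVec bb)) i
    have heq : (P - ((n:ℝ)*lam)*Q)/n - E/n = -((E-P)/n) - lam*Q := by
      field_simp
      ring
    rw [heq]
    have h3 : |(-((E-P)/n)) - lam*Q| ≤ |E-P|/n + lam*|Q| := by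
      have h4 := abs_add_le (-((E-P)/n)) (-(lam*Q))
      rw [← sub_eq_add_neg] at h4
      calc |(-((E-P)/n)) - lam*Q| ≤ |(-((E-P)/n))| + |(-(lam*Q))| := h4
        _ = |E-P|/n + lam*|Q| := by
            rw [abs_neg, abs_neg, abs_div, abs_mul, abs_of_pos hlam, abs_of_pos hnR]
    have h5 : η * lam * (Sᶜ.inf' hScne w) / 2 ≤ η * lam * w j / 2 := by
      have : (0:ℝ) ≤ η * lam := (mul_pos hη hlam).le
      nlinarith
    have h6 : lam * |Q| ≤ lam * (w j * (1 - η)) := mul_le_mul_of_nonneg_left h2 hlam.le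
    have h7 : 0 < lam * w j * η := mul_pos (mul_pos hlam (hw j)) hη
    calc |(-((E-P)/n)) - lam*Q| ≤ |E-P|/n + lam*|Q| := h3
      _ < lam * w j := by nlinarith [h1, h5, h6]
  -- residual and stationarity
  set r : Fin n → ℝ := fun i => ε i - XS.mulVec v i with hr
  have hstat : ∀ k : {j // j ∈ S},
      (∑ i, XS i k * r i) = (n:ℝ) * (lam * (sgn (βstar k.1) * w k.1)) := by
    intro k
    have hswap : (A.mulVec v) k = ∑ i, XS i k * (XS.mulVec v) i := by
      simp only [hA, Matrix.mulVec, dotProduct, Matrix.mul_apply,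
        Matrix.transpose_apply, Finset.sum_mul, Finset.mul_sum]
      rw [Finset.sum_comm]
      exact Finset.sum_congr rfl fun i _ => Finset.sum_congr rfl fun l _ => by ring
    have h1 : (∑ i, XS i k * r i)
        = (XSᵀ.mulVec ε) k - (A.mulVec v) k := by
      rw [hswap]
      simp only [hr, mul_sub]
      rw [Finset.sum_sub_distrib]
      congr 1
    rw [h1, hAv]
    simp [hbb]
  have hGoff : ∀ j ∉ S, |∑ i, X i j * r i| ≤ (n:ℝ) * (lam * w j) := by
    intro j hj
    have h0 := part1 j hj
    have heq : (∑ i, X i j * r i)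
        = (∑ i, X i j * ε i) - (∑ i, X i j * XS.mulVec v i) := by
      simp only [hr, mul_sub]
      rw [Finset.sum_sub_distrib]
    have h1 : |(∑ i, X i j * XS.mulVec v i) - (∑ i, X i j * ε i)| / n < lam * w j := by
      rw [← abs_of_pos hnR, ← abs_div, sub_div]
      exact h0
    rw [heq, abs_sub_comm]
    rw [div_lt_iff₀ hnR] at h1
    nlinarith [h1]
  -- βhat
  set βhat : Fin p → ℝ := fun j => if h : j ∈ S then βstar j + v ⟨j, h⟩ else 0 with hβh
  have hsgn : ∀ j, sgn (βhat j) = sgn (βstar j) := by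
    intro j
    by_cases h : j ∈ S
    · show sgn (if h : j ∈ S then βstar j + v ⟨j, h⟩ else 0) = _
      rw [dif_pos h]
      exact part2 ⟨j, h⟩
    · show sgn (if h : j ∈ S then βstar j + v ⟨j, h⟩ else 0) = _
      rw [dif_neg h, hstar0 j h]
  -- residual identity
  have hXβhat : ∀ i, (∑ j, X i j * βhat j) = (∑ j, X i j * βstar j) + XS.mulVec v i := by
    intro i
    have h1 : (∑ j, X i j * βhat j) = ∑ j ∈ S, X i j * βhat j :=
      (Finset.sum_subset (Finset.subset_univ S) (fun x _ hx => by
        show X i x * (if h : x ∈ S then βstar x + v ⟨x, h⟩ else 0) = 0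
        rw [dif_neg hx, mul_zero])).symm
    have h2 : (∑ j, X i j * βstar j) = ∑ j ∈ S, X i j * βstar j :=
      (Finset.sum_subset (Finset.subset_univ S) (fun x _ hx => by
        rw [hstar0 x hx, mul_zero])).symm
    rw [h1, h2, ← Finset.sum_attach S (fun j => X i j * βhat j),
      ← Finset.sum_attach S (fun j => X i j * βstar j)]
    have h3 : ∀ j : {x // x ∈ S}, X i j.1 * βhat j.1 = X i j.1 * βstar j.1 + XS i j * v j := by
      intro j
      show X i j.1 * (if h : j.1 ∈ S then βstar j.1 + v ⟨j.1, h⟩ else 0) = _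
      rw [dif_pos j.2, hXS]
      simp only [Matrix.of_apply]
      ring
    rw [Finset.sum_congr rfl (fun j _ => h3 j), Finset.sum_add_distrib]
    congr 1
  have hres : ∀ i, ((∑ j, X i j * βstar j) + ε i - ∑ j, X i j * βhat j) = r i := by
    intro i
    rw [hXβhat i, hr]
    ring
  refine ⟨part1, part2, βhat, ?_, hsgn⟩
  intro β
  set G : Fin p → ℝ := fun j => ∑ i, X i j * r i with hG
  set d : Fin p → ℝ := fun j => βhat j - β j with hd
  have hGS : ∀ (j : Fin p) (h : j ∈ S), G j = (n:ℝ) * (lam * (sgn (βstar j) * w j)) := by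
    intro j h
    have := hstat ⟨j, h⟩
    rw [hXS] at this
    simpa using this
  -- per-term nonnegativity
  have hterm : ∀ j, 0 ≤ (1/(n:ℝ)) * (d j * G j) + lam * (w j * (|β j| - |βhat j|)) := by
    intro j
    by_cases h : j ∈ S
    · have hGj : G j = (n:ℝ) * (lam * (sgn (βstar j) * w j)) := hGS j h
      have hsb : sgn (βstar j) * βhat j = |βhat j| := by
        rw [← hsgn j]; exact sgn_mul_self _
      have hle : sgn (βstar j) * β j ≤ |β j| := by
        calc sgn (βstar j) * β j ≤ |sgn (βstar j) * β j| := le_abs_self _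
          _ = |sgn (βstar j)| * |β j| := abs_mul _ _
          _ ≤ 1 * |β j| := mul_le_mul_of_nonneg_right (abs_sgn_le_one _) (abs_nonneg _)
          _ = |β j| := one_mul _
      have heq : (1/(n:ℝ)) * (d j * G j) + lam * (w j * (|β j| - |βhat j|))
          = lam * w j * (|β j| - sgn (βstar j) * β j) := by
        rw [hGj, ← hsb]
        show (1/(n:ℝ)) * ((βhat j - β j) * _) + _ = _
        field_simp
        ring
      rw [heq]
      exact mul_nonneg (mul_nonneg hlam.le (hw j).le) (sub_nonneg.2 hle)
    · have hb0 : βhat j = 0 := dif_neg h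
      have h1 : |d j * G j| ≤ |β j| * ((n:ℝ) * (lam * w j)) := by
        show |(βhat j - β j) * G j| ≤ _
        rw [hb0, zero_sub, abs_mul, abs_neg]
        exact mul_le_mul_of_nonneg_left (hGoff j h) (abs_nonneg _)
      have h2 : -(|β j| * ((n:ℝ) * (lam * w j))) ≤ d j * G j :=
        le_trans (neg_le_neg h1) (neg_abs_le _)
      have h3 : (1/(n:ℝ)) * (-(|β j| * ((n:ℝ) * (lam * w j)))) = -(lam * (w j * |β j|)) := by
        field_simp
      have h4 := mul_le_mul_of_nonneg_left h2 (by positivity : (0:ℝ) ≤ 1/(n:ℝ))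
      rw [h3] at h4
      have hb0' : |βhat j| = 0 := by rw [hb0, abs_zero]
      rw [hb0']
      linarith
  have hT : 0 ≤ ∑ j, ((1/(n:ℝ)) * (d j * G j) + lam * (w j * (|β j| - |βhat j|))) :=
    Finset.sum_nonneg fun j _ => hterm j
  have hTsplit : ∑ j, ((1/(n:ℝ)) * (d j * G j) + lam * (w j * (|β j| - |βhat j|)))
      = (1/(n:ℝ)) * (∑ j, d j * G j)
        + lam * ((∑ j, w j * |β j|) - (∑ j, w j * |βhat j|)) := by
    rw [Finset.sum_add_distrib, ← Finset.mul_sum, ← Finset.mul_sum]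
    congr 1
    congr 1
    rw [← Finset.sum_sub_distrib]
    exact Finset.sum_congr rfl fun j _ => by ring
  have hcross : ∑ i, r i * (∑ j, X i j * d j) = ∑ j, d j * G j := by
    simp only [hG, Finset.mul_sum, Finset.sum_mul]
    rw [Finset.sum_comm]
    exact Finset.sum_congr rfl fun j _ => Finset.sum_congr rfl fun i _ => by ring
  have hsq : ∑ i, ((∑ j, X i j * βstar j) + ε i - ∑ j, X i j * β j)^2
      = (∑ i, (r i)^2) + 2 * (∑ j, d j * G j) + (∑ i, (∑ j, X i j * d j)^2) := by
    rw [← hcross, Finset.mul_sum, ← Finset.sum_add_distrib, ← Finset.sum_add_distrib]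
    refine Finset.sum_congr rfl fun i _ => ?_
    have h6 : ∑ j, X i j * d j = (∑ j, X i j * βhat j) - ∑ j, X i j * β j := by
      show (∑ j, X i j * (βhat j - β j)) = _
      simp only [mul_sub]
      rw [Finset.sum_sub_distrib]
    have h5 : (∑ j, X i j * βstar j) + ε i - ∑ j, X i j * β j = r i + ∑ j, X i j * d j := by
      rw [h6, ← hres i]
      ring
    rw [h5]
    ring
  have hrs : ∑ i, ((∑ j, X i j * βstar j) + ε i - ∑ j, X i j * βhat j)^2 = ∑ i, (r i)^2 :=
    Finset.sum_congr rfl fun i _ => by rw [hres i]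
  rw [hrs, hsq]
  have hsqpos : 0 ≤ ∑ i, (∑ j, X i j * d j)^2 := Finset.sum_nonneg fun i _ => sq_nonneg _
  have key : (1/(2*(n:ℝ))) * ((∑ i, (r i)^2) + 2 * (∑ j, d j * G j) + (∑ i, (∑ j, X i j * d j)^2))
        + lam * (∑ j, w j * |β j|)
      = ((1/(2*(n:ℝ))) * (∑ i, (r i)^2) + lam * (∑ j, w j * |βhat j|))
        + ((1/(n:ℝ)) * (∑ j, d j * G j)
          + lam * ((∑ j, w j * |β j|) - (∑ j, w j * |βhat j|)))
        + (1/(2*(n:ℝ))) * (∑ i, (∑ j, X i j * d j)^2) := by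
    field_simp
    ring
  rw [key]
  rw [hTsplit] at hT
  have h8 : 0 ≤ (1/(2*(n:ℝ))) * (∑ i, (∑ j, X i j * d j)^2) := by positivity
  linarith
end
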